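/- arXiv:1704.01654 — 2 statements merged into one kernel-verified Lean document; each statement's English description precedes it below -/
import Mathlib

section
/- Let W = ℚ[a₁,…,a₁₂]/(H + (a₁₂)), where H is the ideal generated by the 2×2 minors of the 4×5 matrix with rows (0, a₁, a₂+a₅, a₃+a₆+a₉, a₄+a₇+a₁₀), (a₁, a₂, a₃, a₄, a₈+a₁₁), (a₅, a₆, a₇, a₈, a₁₂), (a₉, a₁₀, a₁₁, a₁₂, 0). Set l₁ = a₂+a₄−a₆+a₁₀ and l₂ = a₂+2a₃+2a₅+3a₆−a₈+6a₉−a₁₀ in W. Then (a₆a₁₁) ∩ (l₁) = (a₆a₁₁) ∩ (l₂) = (a₁a₆a₁₁). -/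
open MvPolynomial

set_option synthInstance.maxHeartbeats 1000000
set_option maxRecDepth 10000
set_option maxHeartbeats 1000000

noncomputable section

/-- The 4×5 matrix with rows `(0, a₁, a₂+a₅, a₃+a₆+a₉, a₄+a₇+a₁₀)`,
`(a₁, a₂, a₃, a₄, a₈+a₁₁)`, `(a₅, a₆, a₇, a₈, a₁₂)`, `(a₉, a₁₀, a₁₁, a₁₂, 0)`,
where `aᵢ = X (i-1)`. -/
def segMat45 : Matrix (Fin 4) (Fin 5) (MvPolynomial (Fin 12) ℚ) :=
  !![0, X 0, X 1 + X 4, X 2 + X 5 + X 8, X 3 + X 6 + X 9;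
     X 0, X 1, X 2, X 3, X 7 + X 10;
     X 4, X 5, X 6, X 7, X 11;
     X 8, X 9, X 10, X 11, 0]

/-- The ideal `H` generated by the 2×2 minors of `segMat45`. -/
def segIdeal45 : Ideal (MvPolynomial (Fin 12) ℚ) :=
  Ideal.span {p | ∃ (i i' : Fin 4) (j j' : Fin 5), i < i' ∧ j < j' ∧
    p = segMat45 i j * segMat45 i' j' - segMat45 i j' * segMat45 i' j}

/-- The ring `W = ℚ[a₁,…,a₁₂]/(H + (a₁₂))`, where `a₁₂ = X 11`. -/
abbrev SegW45 := MvPolynomial (Fin 12) ℚ ⧸ (segIdeal45 + Ideal.span {X 11})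

/-- The residue class of `a_{i+1} = X i` in `W` (zero-based index). -/
def wa (i : Fin 12) : SegW45 :=
  Ideal.Quotient.mk (segIdeal45 + Ideal.span {X 11}) (X i)


abbrev MvP := MvPolynomial (Fin 12) ℚ

abbrev JJ : Ideal MvP := segIdeal45 + Ideal.span {X 11}

def minorSet : Set MvP := {p | ∃ (i i' : Fin 4) (j j' : Fin 5), i < i' ∧ j < j' ∧
    p = segMat45 i j * segMat45 i' j' - segMat45 i j' * segMat45 i' j}

lemma JJ_eq : JJ = Ideal.span (minorSet ∪ {X 11}) := by
  rw [Ideal.span_union]; rfl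

lemma segle : segIdeal45 ≤ JJ := le_sup_left

lemma x11le : Ideal.span {(X 11 : MvP)} ≤ JJ := le_sup_right

lemma unscale {x : MvP} {I : Ideal MvP} (n : ℚ) (hn : n ≠ 0) (h : C n * x ∈ I) : x ∈ I := by
  have hx : x = C n⁻¹ * (C n * x) := by
    rw [← mul_assoc, ← C_mul, inv_mul_cancel₀ hn, C_1, one_mul]
  rw [hx]; exact Ideal.mul_mem_left _ _ h

lemma pderiv_num (i : Fin 12) (n : ℕ) [n.AtLeastTwo] :
    pderiv i (OfNat.ofNat n : MvP) = 0 := by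
  have h : (OfNat.ofNat n : MvP) = C (OfNat.ofNat n) := by rw [map_ofNat]
  rw [h, pderiv_C]

def Dd (i j : Fin 12) (p : MvP) : ℚ := constantCoeff (pderiv i (pderiv j p))

lemma Dd_mul_quad (i j : Fin 12) (r A B Cc D : MvP) (hA : constantCoeff A = 0)
    (hB : constantCoeff B = 0) (hC : constantCoeff Cc = 0) (hD : constantCoeff D = 0) :
    Dd i j (r * (A * B - Cc * D)) = constantCoeff r * Dd i j (A * B - Cc * D) := by
  simp only [Dd, pderiv_mul, map_sub, map_add, map_mul, hA, hB, hC, hD]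
  ring

lemma cc_entry (i : Fin 4) (j : Fin 5) : constantCoeff (segMat45 i j) = 0 := by
  fin_cases i <;> fin_cases j <;> simp [segMat45]

lemma mnr_1 : (((0) * (X 2) - (X 1 + X 4) * (X 0)) : MvP) ∈ segIdeal45 :=
  Ideal.subset_span ⟨0, 1, 0, 2, by decide, by decide, by simp [segMat45]⟩

lemma mnr_2 : (((0) * (X 3) - (X 2 + X 5 + X 8) * (X 0)) : MvP) ∈ segIdeal45 :=
  Ideal.subset_span ⟨0, 1, 0, 3, by decide, by decide, by simp [segMat45]⟩

lemma mnr_3 : (((0) * (X 7 + X 10) - (X 3 + X 6 + X 9) * (X 0)) : MvP) ∈ segIdeal45 :=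
  Ideal.subset_span ⟨0, 1, 0, 4, by decide, by decide, by simp [segMat45]⟩

lemma mnr_4 : (((X 0) * (X 2) - (X 1 + X 4) * (X 1)) : MvP) ∈ segIdeal45 :=
  Ideal.subset_span ⟨0, 1, 1, 2, by decide, by decide, by simp [segMat45]⟩

lemma mnr_5 : (((X 0) * (X 3) - (X 2 + X 5 + X 8) * (X 1)) : MvP) ∈ segIdeal45 :=
  Ideal.subset_span ⟨0, 1, 1, 3, by decide, by decide, by simp [segMat45]⟩

lemma mnr_6 : (((X 0) * (X 7 + X 10) - (X 3 + X 6 + X 9) * (X 1)) : MvP) ∈ segIdeal45 :=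
  Ideal.subset_span ⟨0, 1, 1, 4, by decide, by decide, by simp [segMat45]⟩

lemma mnr_7 : (((X 1 + X 4) * (X 3) - (X 2 + X 5 + X 8) * (X 2)) : MvP) ∈ segIdeal45 :=
  Ideal.subset_span ⟨0, 1, 2, 3, by decide, by decide, by simp [segMat45]⟩

lemma mnr_8 : (((X 1 + X 4) * (X 7 + X 10) - (X 3 + X 6 + X 9) * (X 2)) : MvP) ∈ segIdeal45 :=
  Ideal.subset_span ⟨0, 1, 2, 4, by decide, by decide, by simp [segMat45]⟩

lemma mnr_9 : (((X 2 + X 5 + X 8) * (X 7 + X 10) - (X 3 + X 6 + X 9) * (X 3)) : MvP) ∈ segIdeal45 :=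
  Ideal.subset_span ⟨0, 1, 3, 4, by decide, by decide, by simp [segMat45]⟩

lemma mnr_10 : (((0) * (X 5) - (X 0) * (X 4)) : MvP) ∈ segIdeal45 :=
  Ideal.subset_span ⟨0, 2, 0, 1, by decide, by decide, by simp [segMat45]⟩

lemma mnr_11 : (((0) * (X 6) - (X 1 + X 4) * (X 4)) : MvP) ∈ segIdeal45 :=
  Ideal.subset_span ⟨0, 2, 0, 2, by decide, by decide, by simp [segMat45]⟩

lemma mnr_12 : (((0) * (X 7) - (X 2 + X 5 + X 8) * (X 4)) : MvP) ∈ segIdeal45 :=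
  Ideal.subset_span ⟨0, 2, 0, 3, by decide, by decide, by simp [segMat45]⟩

lemma mnr_13 : (((0) * (X 11) - (X 3 + X 6 + X 9) * (X 4)) : MvP) ∈ segIdeal45 :=
  Ideal.subset_span ⟨0, 2, 0, 4, by decide, by decide, by simp [segMat45]⟩

lemma mnr_14 : (((X 0) * (X 6) - (X 1 + X 4) * (X 5)) : MvP) ∈ segIdeal45 :=
  Ideal.subset_span ⟨0, 2, 1, 2, by decide, by decide, by simp [segMat45]⟩

lemma mnr_15 : (((X 0) * (X 7) - (X 2 + X 5 + X 8) * (X 5)) : MvP) ∈ segIdeal45 :=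
  Ideal.subset_span ⟨0, 2, 1, 3, by decide, by decide, by simp [segMat45]⟩

lemma mnr_16 : (((X 0) * (X 11) - (X 3 + X 6 + X 9) * (X 5)) : MvP) ∈ segIdeal45 :=
  Ideal.subset_span ⟨0, 2, 1, 4, by decide, by decide, by simp [segMat45]⟩

lemma mnr_17 : (((X 1 + X 4) * (X 7) - (X 2 + X 5 + X 8) * (X 6)) : MvP) ∈ segIdeal45 :=
  Ideal.subset_span ⟨0, 2, 2, 3, by decide, by decide, by simp [segMat45]⟩

lemma mnr_19 : (((X 2 + X 5 + X 8) * (X 11) - (X 3 + X 6 + X 9) * (X 7)) : MvP) ∈ segIdeal45 :=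
  Ideal.subset_span ⟨0, 2, 3, 4, by decide, by decide, by simp [segMat45]⟩

lemma mnr_20 : (((0) * (X 9) - (X 0) * (X 8)) : MvP) ∈ segIdeal45 :=
  Ideal.subset_span ⟨0, 3, 0, 1, by decide, by decide, by simp [segMat45]⟩

lemma mnr_21 : (((0) * (X 10) - (X 1 + X 4) * (X 8)) : MvP) ∈ segIdeal45 :=
  Ideal.subset_span ⟨0, 3, 0, 2, by decide, by decide, by simp [segMat45]⟩

lemma mnr_22 : (((0) * (X 11) - (X 2 + X 5 + X 8) * (X 8)) : MvP) ∈ segIdeal45 :=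
  Ideal.subset_span ⟨0, 3, 0, 3, by decide, by decide, by simp [segMat45]⟩

lemma mnr_23 : (((0) * (0) - (X 3 + X 6 + X 9) * (X 8)) : MvP) ∈ segIdeal45 :=
  Ideal.subset_span ⟨0, 3, 0, 4, by decide, by decide, by simp [segMat45]⟩

lemma mnr_24 : (((X 0) * (X 10) - (X 1 + X 4) * (X 9)) : MvP) ∈ segIdeal45 :=
  Ideal.subset_span ⟨0, 3, 1, 2, by decide, by decide, by simp [segMat45]⟩

lemma mnr_25 : (((X 0) * (X 11) - (X 2 + X 5 + X 8) * (X 9)) : MvP) ∈ segIdeal45 :=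
  Ideal.subset_span ⟨0, 3, 1, 3, by decide, by decide, by simp [segMat45]⟩

lemma mnr_26 : (((X 0) * (0) - (X 3 + X 6 + X 9) * (X 9)) : MvP) ∈ segIdeal45 :=
  Ideal.subset_span ⟨0, 3, 1, 4, by decide, by decide, by simp [segMat45]⟩

lemma mnr_27 : (((X 1 + X 4) * (X 11) - (X 2 + X 5 + X 8) * (X 10)) : MvP) ∈ segIdeal45 :=
  Ideal.subset_span ⟨0, 3, 2, 3, by decide, by decide, by simp [segMat45]⟩

lemma mnr_28 : (((X 1 + X 4) * (0) - (X 3 + X 6 + X 9) * (X 10)) : MvP) ∈ segIdeal45 :=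
  Ideal.subset_span ⟨0, 3, 2, 4, by decide, by decide, by simp [segMat45]⟩

lemma mnr_29 : (((X 2 + X 5 + X 8) * (0) - (X 3 + X 6 + X 9) * (X 11)) : MvP) ∈ segIdeal45 :=
  Ideal.subset_span ⟨0, 3, 3, 4, by decide, by decide, by simp [segMat45]⟩

lemma mnr_30 : (((X 0) * (X 5) - (X 1) * (X 4)) : MvP) ∈ segIdeal45 :=
  Ideal.subset_span ⟨1, 2, 0, 1, by decide, by decide, by simp [segMat45]⟩

lemma mnr_31 : (((X 0) * (X 6) - (X 2) * (X 4)) : MvP) ∈ segIdeal45 :=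
  Ideal.subset_span ⟨1, 2, 0, 2, by decide, by decide, by simp [segMat45]⟩

lemma mnr_32 : (((X 0) * (X 7) - (X 3) * (X 4)) : MvP) ∈ segIdeal45 :=
  Ideal.subset_span ⟨1, 2, 0, 3, by decide, by decide, by simp [segMat45]⟩

lemma mnr_33 : (((X 0) * (X 11) - (X 7 + X 10) * (X 4)) : MvP) ∈ segIdeal45 :=
  Ideal.subset_span ⟨1, 2, 0, 4, by decide, by decide, by simp [segMat45]⟩

lemma mnr_34 : (((X 1) * (X 6) - (X 2) * (X 5)) : MvP) ∈ segIdeal45 :=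
  Ideal.subset_span ⟨1, 2, 1, 2, by decide, by decide, by simp [segMat45]⟩

lemma mnr_35 : (((X 1) * (X 7) - (X 3) * (X 5)) : MvP) ∈ segIdeal45 :=
  Ideal.subset_span ⟨1, 2, 1, 3, by decide, by decide, by simp [segMat45]⟩

lemma mnr_36 : (((X 1) * (X 11) - (X 7 + X 10) * (X 5)) : MvP) ∈ segIdeal45 :=
  Ideal.subset_span ⟨1, 2, 1, 4, by decide, by decide, by simp [segMat45]⟩

lemma mnr_37 : (((X 2) * (X 7) - (X 3) * (X 6)) : MvP) ∈ segIdeal45 :=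
  Ideal.subset_span ⟨1, 2, 2, 3, by decide, by decide, by simp [segMat45]⟩

lemma mnr_38 : (((X 2) * (X 11) - (X 7 + X 10) * (X 6)) : MvP) ∈ segIdeal45 :=
  Ideal.subset_span ⟨1, 2, 2, 4, by decide, by decide, by simp [segMat45]⟩

lemma mnr_39 : (((X 3) * (X 11) - (X 7 + X 10) * (X 7)) : MvP) ∈ segIdeal45 :=
  Ideal.subset_span ⟨1, 2, 3, 4, by decide, by decide, by simp [segMat45]⟩

lemma mnr_40 : (((X 0) * (X 9) - (X 1) * (X 8)) : MvP) ∈ segIdeal45 :=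
  Ideal.subset_span ⟨1, 3, 0, 1, by decide, by decide, by simp [segMat45]⟩

lemma mnr_41 : (((X 0) * (X 10) - (X 2) * (X 8)) : MvP) ∈ segIdeal45 :=
  Ideal.subset_span ⟨1, 3, 0, 2, by decide, by decide, by simp [segMat45]⟩

lemma mnr_42 : (((X 0) * (X 11) - (X 3) * (X 8)) : MvP) ∈ segIdeal45 :=
  Ideal.subset_span ⟨1, 3, 0, 3, by decide, by decide, by simp [segMat45]⟩

lemma mnr_43 : (((X 0) * (0) - (X 7 + X 10) * (X 8)) : MvP) ∈ segIdeal45 :=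
  Ideal.subset_span ⟨1, 3, 0, 4, by decide, by decide, by simp [segMat45]⟩

lemma mnr_44 : (((X 1) * (X 10) - (X 2) * (X 9)) : MvP) ∈ segIdeal45 :=
  Ideal.subset_span ⟨1, 3, 1, 2, by decide, by decide, by simp [segMat45]⟩

lemma mnr_45 : (((X 1) * (X 11) - (X 3) * (X 9)) : MvP) ∈ segIdeal45 :=
  Ideal.subset_span ⟨1, 3, 1, 3, by decide, by decide, by simp [segMat45]⟩

lemma mnr_46 : (((X 1) * (0) - (X 7 + X 10) * (X 9)) : MvP) ∈ segIdeal45 :=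
  Ideal.subset_span ⟨1, 3, 1, 4, by decide, by decide, by simp [segMat45]⟩

lemma mnr_47 : (((X 2) * (X 11) - (X 3) * (X 10)) : MvP) ∈ segIdeal45 :=
  Ideal.subset_span ⟨1, 3, 2, 3, by decide, by decide, by simp [segMat45]⟩

lemma mnr_48 : (((X 2) * (0) - (X 7 + X 10) * (X 10)) : MvP) ∈ segIdeal45 :=
  Ideal.subset_span ⟨1, 3, 2, 4, by decide, by decide, by simp [segMat45]⟩

lemma mnr_50 : (((X 4) * (X 9) - (X 5) * (X 8)) : MvP) ∈ segIdeal45 :=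
  Ideal.subset_span ⟨2, 3, 0, 1, by decide, by decide, by simp [segMat45]⟩

lemma mnr_51 : (((X 4) * (X 10) - (X 6) * (X 8)) : MvP) ∈ segIdeal45 :=
  Ideal.subset_span ⟨2, 3, 0, 2, by decide, by decide, by simp [segMat45]⟩

lemma mnr_52 : (((X 4) * (X 11) - (X 7) * (X 8)) : MvP) ∈ segIdeal45 :=
  Ideal.subset_span ⟨2, 3, 0, 3, by decide, by decide, by simp [segMat45]⟩

lemma mnr_53 : (((X 4) * (0) - (X 11) * (X 8)) : MvP) ∈ segIdeal45 :=
  Ideal.subset_span ⟨2, 3, 0, 4, by decide, by decide, by simp [segMat45]⟩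

lemma mnr_54 : (((X 5) * (X 10) - (X 6) * (X 9)) : MvP) ∈ segIdeal45 :=
  Ideal.subset_span ⟨2, 3, 1, 2, by decide, by decide, by simp [segMat45]⟩

lemma mnr_55 : (((X 5) * (X 11) - (X 7) * (X 9)) : MvP) ∈ segIdeal45 :=
  Ideal.subset_span ⟨2, 3, 1, 3, by decide, by decide, by simp [segMat45]⟩

lemma mnr_56 : (((X 5) * (0) - (X 11) * (X 9)) : MvP) ∈ segIdeal45 :=
  Ideal.subset_span ⟨2, 3, 1, 4, by decide, by decide, by simp [segMat45]⟩

lemma mnr_57 : (((X 6) * (X 11) - (X 7) * (X 10)) : MvP) ∈ segIdeal45 :=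
  Ideal.subset_span ⟨2, 3, 2, 3, by decide, by decide, by simp [segMat45]⟩

lemma mnr_58 : (((X 6) * (0) - (X 11) * (X 10)) : MvP) ∈ segIdeal45 :=
  Ideal.subset_span ⟨2, 3, 2, 4, by decide, by decide, by simp [segMat45]⟩

lemma memJ_1 : (X 1 * (X 5 * X 10) : MvP) ∈ JJ := by
  have hkey : (X 1 * (X 5 * X 10) : MvP) =
      (X 10) * ((0) * (X 7) - (X 2 + X 5 + X 8) * (X 4)) +
      ((-1) * X 10) * ((X 0) * (X 6) - (X 1 + X 4) * (X 5)) +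
      ((-1) * X 10) * ((0) * (X 10) - (X 1 + X 4) * (X 8)) +
      ((-2) * X 0) * ((X 1 + X 4) * (0) - (X 3 + X 6 + X 9) * (X 10)) +
      ((-1) * X 10) * ((X 0) * (X 6) - (X 2) * (X 4)) +
      (X 10) * ((X 0) * (X 9) - (X 1) * (X 8)) +
      ((3) * X 0) * ((X 1) * (0) - (X 7 + X 10) * (X 9)) +
      ((2) * X 0) * ((X 2) * (X 11) - (X 3) * (X 10)) +
      ((-3) * X 0) * ((X 5) * (X 11) - (X 7) * (X 9)) +
      ((-2) * X 0 * X 2 + (3) * X 0 * X 5) * X 11 := by ring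
  rw [hkey]
  exact (add_mem (add_mem (add_mem (add_mem (add_mem (add_mem (add_mem (add_mem (add_mem (segle (Ideal.mul_mem_left _ _ mnr_12)) (segle (Ideal.mul_mem_left _ _ mnr_14))) (segle (Ideal.mul_mem_left _ _ mnr_21))) (segle (Ideal.mul_mem_left _ _ mnr_28))) (segle (Ideal.mul_mem_left _ _ mnr_31))) (segle (Ideal.mul_mem_left _ _ mnr_40))) (segle (Ideal.mul_mem_left _ _ mnr_46))) (segle (Ideal.mul_mem_left _ _ mnr_47))) (segle (Ideal.mul_mem_left _ _ mnr_55))) (x11le (Ideal.mul_mem_left _ _ (Ideal.mem_span_singleton_self _))))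

lemma memJ_2 : (X 2 * (X 5 * X 10) : MvP) ∈ JJ := by
  have hkey : (X 2 * (X 5 * X 10) : MvP) =
      (X 10) * ((X 0) * (X 10) - (X 1 + X 4) * (X 9)) +
      ((-1) * X 1) * ((X 1 + X 4) * (0) - (X 3 + X 6 + X 9) * (X 10)) +
      ((-1) * X 10) * ((X 1) * (X 6) - (X 2) * (X 5)) +
      ((-1) * X 4) * ((X 1) * (0) - (X 7 + X 10) * (X 9)) +
      (X 1) * ((X 2) * (X 11) - (X 3) * (X 10)) +
      (X 0) * ((X 2) * (0) - (X 7 + X 10) * (X 10)) +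
      (X 4) * ((X 5) * (X 11) - (X 7) * (X 9)) +
      ((-1) * X 0) * ((X 6) * (X 11) - (X 7) * (X 10)) +
      ((-1) * X 1 * X 2 + (-1) * X 4 * X 5 + X 0 * X 6) * X 11 := by ring
  rw [hkey]
  exact (add_mem (add_mem (add_mem (add_mem (add_mem (add_mem (add_mem (add_mem (segle (Ideal.mul_mem_left _ _ mnr_24)) (segle (Ideal.mul_mem_left _ _ mnr_28))) (segle (Ideal.mul_mem_left _ _ mnr_34))) (segle (Ideal.mul_mem_left _ _ mnr_46))) (segle (Ideal.mul_mem_left _ _ mnr_47))) (segle (Ideal.mul_mem_left _ _ mnr_48))) (segle (Ideal.mul_mem_left _ _ mnr_55))) (segle (Ideal.mul_mem_left _ _ mnr_57))) (x11le (Ideal.mul_mem_left _ _ (Ideal.mem_span_singleton_self _))))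

lemma memJ_3 : (X 3 * (X 5 * X 10) : MvP) ∈ JJ := by
  have hkey : (X 3 * (X 5 * X 10) : MvP) =
      ((-1) * X 10) * ((X 1) * (X 7) - (X 3) * (X 5)) +
      ((-1) * X 1) * ((X 6) * (X 11) - (X 7) * (X 10)) +
      ((-1) * X 0) * ((X 6) * (0) - (X 11) * (X 10)) +
      (X 1 * X 6 + (-1) * X 0 * X 10) * X 11 := by ring
  rw [hkey]
  exact (add_mem (add_mem (add_mem (segle (Ideal.mul_mem_left _ _ mnr_35)) (segle (Ideal.mul_mem_left _ _ mnr_57))) (segle (Ideal.mul_mem_left _ _ mnr_58))) (x11le (Ideal.mul_mem_left _ _ (Ideal.mem_span_singleton_self _))))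

lemma memJ_4 : (X 4 * (X 5 * X 10) : MvP) ∈ JJ := by
  have hkey : (X 4 * (X 5 * X 10) : MvP) =
      ((-1) * X 10) * ((0) * (X 7) - (X 2 + X 5 + X 8) * (X 4)) +
      (X 10) * ((0) * (X 10) - (X 1 + X 4) * (X 8)) +
      (X 0) * ((X 1 + X 4) * (0) - (X 3 + X 6 + X 9) * (X 10)) +
      (X 10) * ((X 0) * (X 6) - (X 2) * (X 4)) +
      ((-1) * X 10) * ((X 0) * (X 9) - (X 1) * (X 8)) +
      ((-2) * X 0) * ((X 1) * (0) - (X 7 + X 10) * (X 9)) +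
      ((-1) * X 0) * ((X 2) * (X 11) - (X 3) * (X 10)) +
      ((2) * X 0) * ((X 5) * (X 11) - (X 7) * (X 9)) +
      (X 0 * X 2 + (-2) * X 0 * X 5) * X 11 := by ring
  rw [hkey]
  exact (add_mem (add_mem (add_mem (add_mem (add_mem (add_mem (add_mem (add_mem (segle (Ideal.mul_mem_left _ _ mnr_12)) (segle (Ideal.mul_mem_left _ _ mnr_21))) (segle (Ideal.mul_mem_left _ _ mnr_28))) (segle (Ideal.mul_mem_left _ _ mnr_31))) (segle (Ideal.mul_mem_left _ _ mnr_40))) (segle (Ideal.mul_mem_left _ _ mnr_46))) (segle (Ideal.mul_mem_left _ _ mnr_47))) (segle (Ideal.mul_mem_left _ _ mnr_55))) (x11le (Ideal.mul_mem_left _ _ (Ideal.mem_span_singleton_self _))))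

lemma memJ_5 : (X 5 * (X 5 * X 10) : MvP) ∈ JJ := by
  have hkey : (X 5 * (X 5 * X 10) : MvP) =
      ((-1) * X 10) * ((X 0) * (X 7) - (X 2 + X 5 + X 8) * (X 5)) +
      ((-1) * X 10) * ((X 0) * (X 10) - (X 1 + X 4) * (X 9)) +
      (X 1) * ((X 1 + X 4) * (0) - (X 3 + X 6 + X 9) * (X 10)) +
      (X 10) * ((X 1) * (X 6) - (X 2) * (X 5)) +
      ((2) * X 4) * ((X 1) * (0) - (X 7 + X 10) * (X 9)) +
      ((-1) * X 1) * ((X 2) * (X 11) - (X 3) * (X 10)) +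
      ((-1) * X 0) * ((X 2) * (0) - (X 7 + X 10) * (X 10)) +
      (X 10) * ((X 4) * (X 9) - (X 5) * (X 8)) +
      ((-2) * X 4) * ((X 5) * (X 11) - (X 7) * (X 9)) +
      (X 1 * X 2 + (2) * X 4 * X 5) * X 11 := by ring
  rw [hkey]
  exact (add_mem (add_mem (add_mem (add_mem (add_mem (add_mem (add_mem (add_mem (add_mem (segle (Ideal.mul_mem_left _ _ mnr_15)) (segle (Ideal.mul_mem_left _ _ mnr_24))) (segle (Ideal.mul_mem_left _ _ mnr_28))) (segle (Ideal.mul_mem_left _ _ mnr_34))) (segle (Ideal.mul_mem_left _ _ mnr_46))) (segle (Ideal.mul_mem_left _ _ mnr_47))) (segle (Ideal.mul_mem_left _ _ mnr_48))) (segle (Ideal.mul_mem_left _ _ mnr_50))) (segle (Ideal.mul_mem_left _ _ mnr_55))) (x11le (Ideal.mul_mem_left _ _ (Ideal.mem_span_singleton_self _))))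

lemma memJ_6 : (X 6 * (X 5 * X 10) : MvP) ∈ JJ := by
  have hkey : (X 6 * (X 5 * X 10) : MvP) =
      ((-1) * X 10) * ((X 0) * (X 11) - (X 3 + X 6 + X 9) * (X 5)) +
      ((-1) * X 10) * ((0) * (0) - (X 3 + X 6 + X 9) * (X 8)) +
      (X 10) * ((X 0) * (X 11) - (X 2 + X 5 + X 8) * (X 9)) +
      (X 10) * ((X 1) * (X 7) - (X 3) * (X 5)) +
      (X 10) * ((X 0) * (X 11) - (X 3) * (X 8)) +
      ((-1) * X 10) * ((X 1) * (X 10) - (X 2) * (X 9)) +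
      ((-1) * X 1 + X 4) * ((X 2) * (0) - (X 7 + X 10) * (X 10)) +
      (X 10) * ((X 4) * (X 10) - (X 6) * (X 8)) +
      ((2) * X 1 + (-1) * X 4) * ((X 6) * (X 11) - (X 7) * (X 10)) +
      ((-2) * X 1 * X 6 + X 4 * X 6 + (-1) * X 0 * X 10) * X 11 := by ring
  rw [hkey]
  exact (add_mem (add_mem (add_mem (add_mem (add_mem (add_mem (add_mem (add_mem (add_mem (segle (Ideal.mul_mem_left _ _ mnr_16)) (segle (Ideal.mul_mem_left _ _ mnr_23))) (segle (Ideal.mul_mem_left _ _ mnr_25))) (segle (Ideal.mul_mem_left _ _ mnr_35))) (segle (Ideal.mul_mem_left _ _ mnr_42))) (segle (Ideal.mul_mem_left _ _ mnr_44))) (segle (Ideal.mul_mem_left _ _ mnr_48))) (segle (Ideal.mul_mem_left _ _ mnr_51))) (segle (Ideal.mul_mem_left _ _ mnr_57))) (x11le (Ideal.mul_mem_left _ _ (Ideal.mem_span_singleton_self _))))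

lemma memJ_7 : (X 7 * (X 5 * X 10) : MvP) ∈ JJ := by
  have hkey : (X 7 * (X 5 * X 10) : MvP) =
      ((-1) * X 10) * ((X 1) * (X 11) - (X 7 + X 10) * (X 5)) +
      (X 5) * ((X 2) * (0) - (X 7 + X 10) * (X 10)) +
      ((-1) * X 5) * ((X 6) * (X 11) - (X 7) * (X 10)) +
      ((-1) * X 1) * ((X 6) * (0) - (X 11) * (X 10)) +
      (X 5 * X 6) * X 11 := by ring
  rw [hkey]
  exact (add_mem (add_mem (add_mem (add_mem (segle (Ideal.mul_mem_left _ _ mnr_36)) (segle (Ideal.mul_mem_left _ _ mnr_48))) (segle (Ideal.mul_mem_left _ _ mnr_57))) (segle (Ideal.mul_mem_left _ _ mnr_58))) (x11le (Ideal.mul_mem_left _ _ (Ideal.mem_span_singleton_self _))))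

lemma memJ_8 : (X 8 * (X 5 * X 10) : MvP) ∈ JJ := by
  have hkey : (X 8 * (X 5 * X 10) : MvP) =
      ((-1) * X 4) * ((X 1) * (0) - (X 7 + X 10) * (X 9)) +
      ((-1) * X 10) * ((X 4) * (X 9) - (X 5) * (X 8)) +
      (X 4) * ((X 5) * (X 11) - (X 7) * (X 9)) +
      ((-1) * X 4 * X 5) * X 11 := by ring
  rw [hkey]
  exact (add_mem (add_mem (add_mem (segle (Ideal.mul_mem_left _ _ mnr_46)) (segle (Ideal.mul_mem_left _ _ mnr_50))) (segle (Ideal.mul_mem_left _ _ mnr_55))) (x11le (Ideal.mul_mem_left _ _ (Ideal.mem_span_singleton_self _))))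

lemma memJ_9 : (X 9 * (X 5 * X 10) : MvP) ∈ JJ := by
  have hkey : (X 9 * (X 5 * X 10) : MvP) =
      (X 10) * ((0) * (0) - (X 3 + X 6 + X 9) * (X 8)) +
      ((-1) * X 10) * ((X 0) * (X 11) - (X 2 + X 5 + X 8) * (X 9)) +
      ((-1) * X 10) * ((X 0) * (X 11) - (X 3) * (X 8)) +
      (X 10) * ((X 1) * (X 10) - (X 2) * (X 9)) +
      (X 1 + (-1) * X 4) * ((X 2) * (0) - (X 7 + X 10) * (X 10)) +
      ((-1) * X 10) * ((X 4) * (X 10) - (X 6) * (X 8)) +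
      ((-1) * X 1 + X 4) * ((X 6) * (X 11) - (X 7) * (X 10)) +
      (X 1 * X 6 + (-1) * X 4 * X 6 + (2) * X 0 * X 10) * X 11 := by ring
  rw [hkey]
  exact (add_mem (add_mem (add_mem (add_mem (add_mem (add_mem (add_mem (segle (Ideal.mul_mem_left _ _ mnr_23)) (segle (Ideal.mul_mem_left _ _ mnr_25))) (segle (Ideal.mul_mem_left _ _ mnr_42))) (segle (Ideal.mul_mem_left _ _ mnr_44))) (segle (Ideal.mul_mem_left _ _ mnr_48))) (segle (Ideal.mul_mem_left _ _ mnr_51))) (segle (Ideal.mul_mem_left _ _ mnr_57))) (x11le (Ideal.mul_mem_left _ _ (Ideal.mem_span_singleton_self _))))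

lemma memJ_10 : (X 10 * (X 5 * X 10) : MvP) ∈ JJ := by
  have hkey : (X 10 * (X 5 * X 10) : MvP) =
      ((-1) * X 5) * ((X 2) * (0) - (X 7 + X 10) * (X 10)) +
      (X 5) * ((X 6) * (X 11) - (X 7) * (X 10)) +
      ((-1) * X 5 * X 6) * X 11 := by ring
  rw [hkey]
  exact (add_mem (add_mem (segle (Ideal.mul_mem_left _ _ mnr_48)) (segle (Ideal.mul_mem_left _ _ mnr_57))) (x11le (Ideal.mul_mem_left _ _ (Ideal.mem_span_singleton_self _))))

lemma memJ_11 : (X 11 * (X 5 * X 10) : MvP) ∈ JJ := by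
  have hkey : (X 11 * (X 5 * X 10) : MvP) =
      ((-1) * X 5) * ((X 6) * (0) - (X 11) * (X 10)) := by ring
  rw [hkey]
  exact (segle (Ideal.mul_mem_left _ _ mnr_58))

set_option maxHeartbeats 16000000 in
lemma P2cert_1 : (C (1 : ℚ) * (X 0 * X 5 * X 10) - ((-2) * X 0 * X 10 + (-1) * X 2 * X 10 + (-1) * X 3 * X 10 + (-1) * X 4 * X 10 + (-2) * X 5 * X 10 + (-4) * X 8 * X 10) * (X 1 + X 3 - X 5 + X 9) : MvP) ∈ JJ := by
  have hkey : (C (1 : ℚ) * (X 0 * X 5 * X 10) - ((-2) * X 0 * X 10 + (-1) * X 2 * X 10 + (-1) * X 3 * X 10 + (-1) * X 4 * X 10 + (-2) * X 5 * X 10 + (-4) * X 8 * X 10) * (X 1 + X 3 - X 5 + X 9) : MvP) =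
      ((-2) * X 10) * ((0) * (X 2) - (X 1 + X 4) * (X 0)) +
      ((-3) * X 10) * ((0) * (X 7 + X 10) - (X 3 + X 6 + X 9) * (X 0)) +
      ((-1) * X 10) * ((X 0) * (X 3) - (X 2 + X 5 + X 8) * (X 1)) +
      ((-1) * X 10) * ((X 0) * (X 7 + X 10) - (X 3 + X 6 + X 9) * (X 1)) +
      ((-1) * X 10) * ((X 1 + X 4) * (X 7 + X 10) - (X 3 + X 6 + X 9) * (X 2)) +
      ((-1) * X 10) * ((X 2 + X 5 + X 8) * (X 7 + X 10) - (X 3 + X 6 + X 9) * (X 3)) +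
      ((2) * X 10) * ((0) * (X 5) - (X 0) * (X 4)) +
      ((2) * X 10) * ((0) * (X 7) - (X 2 + X 5 + X 8) * (X 4)) +
      ((-1) * X 10) * ((X 0) * (X 6) - (X 1 + X 4) * (X 5)) +
      ((2) * X 10) * ((X 0) * (X 7) - (X 2 + X 5 + X 8) * (X 5)) +
      ((-1) * X 10) * ((X 0) * (X 11) - (X 3 + X 6 + X 9) * (X 5)) +
      (X 10) * ((X 1 + X 4) * (X 7) - (X 2 + X 5 + X 8) * (X 6)) +
      ((-2) * X 10) * ((0) * (X 10) - (X 1 + X 4) * (X 8)) +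
      ((-3) * X 10) * ((0) * (0) - (X 3 + X 6 + X 9) * (X 8)) +
      (X 10) * ((X 0) * (X 10) - (X 1 + X 4) * (X 9)) +
      ((-1) * X 10) * ((X 0) * (X 11) - (X 2 + X 5 + X 8) * (X 9)) +
      ((-1) * X 10) * ((X 1 + X 4) * (X 11) - (X 2 + X 5 + X 8) * (X 10)) +
      ((-1) * X 10) * ((X 0) * (X 5) - (X 1) * (X 4)) +
      ((-2) * X 10) * ((X 0) * (X 6) - (X 2) * (X 4)) +
      ((-1) * X 10) * ((X 0) * (X 7) - (X 3) * (X 4)) +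
      ((-1) * X 10) * ((X 1) * (X 6) - (X 2) * (X 5)) +
      ((-1) * X 10) * ((X 1) * (X 11) - (X 7 + X 10) * (X 5)) +
      (X 10) * ((X 2) * (X 7) - (X 3) * (X 6)) +
      ((-1) * X 10) * ((X 0) * (X 9) - (X 1) * (X 8)) +
      ((-1) * X 10) * ((X 0) * (X 11) - (X 3) * (X 8)) +
      (X 10) * ((X 1) * (X 10) - (X 2) * (X 9)) +
      (X 4 + X 5) * ((X 2) * (0) - (X 7 + X 10) * (X 10)) +
      ((2) * X 10) * ((X 4) * (X 9) - (X 5) * (X 8)) +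
      ((2) * X 10) * ((X 4) * (X 10) - (X 6) * (X 8)) +
      ((-1) * X 10) * ((X 4) * (X 11) - (X 7) * (X 8)) +
      ((-1) * X 4 + (-1) * X 5) * ((X 6) * (X 11) - (X 7) * (X 10)) +
      (X 4 * X 6 + X 5 * X 6 + (3) * X 0 * X 10 + (2) * X 1 * X 10 + (2) * X 4 * X 10) * X 11 := by rw [C_1]; ring
  rw [hkey]
  exact (add_mem (add_mem (add_mem (add_mem (add_mem (add_mem (add_mem (add_mem (add_mem (add_mem (add_mem (add_mem (add_mem (add_mem (add_mem (add_mem (add_mem (add_mem (add_mem (add_mem (add_mem (add_mem (add_mem (add_mem (add_mem (add_mem (add_mem (add_mem (add_mem (add_mem (add_mem (segle (Ideal.mul_mem_left _ _ mnr_1)) (segle (Ideal.mul_mem_left _ _ mnr_3))) (segle (Ideal.mul_mem_left _ _ mnr_5))) (segle (Ideal.mul_mem_left _ _ mnr_6))) (segle (Ideal.mul_mem_left _ _ mnr_8))) (segle (Ideal.mul_mem_left _ _ mnr_9))) (segle (Ideal.mul_mem_left _ _ mnr_10))) (segle (Ideal.mul_mem_left _ _ mnr_12))) (segle (Ideal.mul_mem_left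 _ _ mnr_14))) (segle (Ideal.mul_mem_left _ _ mnr_15))) (segle (Ideal.mul_mem_left _ _ mnr_16))) (segle (Ideal.mul_mem_left _ _ mnr_17))) (segle (Ideal.mul_mem_left _ _ mnr_21))) (segle (Ideal.mul_mem_left _ _ mnr_23))) (segle (Ideal.mul_mem_left _ _ mnr_24))) (segle (Ideal.mul_mem_left _ _ mnr_25))) (segle (Ideal.mul_mem_left _ _ mnr_27))) (segle (Ideal.mul_mem_left _ _ mnr_30))) (segle (Ideal.mul_mem_left _ _ mnr_31))) (segle (Ideal.mul_mem_left _ _ mnr_32))) (segle (Ideal.mul_mem_left _ _ mnr_34))) (segle (Ideal.mul_mem_left _ _ mnr_36))) (segle (Ideal.mul_mem_left _ _ mnr_37))) (segle (Ideal.mul_mem_left _ _ mnr_40))) (segle (Ideal.mul_mem_left _ _ mnr_42))) (segle (Ideal.mul_mem_left _ _ mnr_44))) (segle (Ideal.mul_mem_left _ _ mnr_48))) (segle (Ideal.mul_mem_left _ _ mnr_50))) (segle (Ideal.mul_mem_left _ _ mnr_51))) (segle (Ideal.mul_mem_left _ _ mnr_52))) (segle (Ideal.mul_mem_left _ _ mnr_57)))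 (x11le (Ideal.mul_mem_left _ _ (Ideal.mem_span_singleton_self _))))

set_option maxHeartbeats 16000000 in
lemma P2cert_2 : (C (21 : ℚ) * (X 0 * X 5 * X 10) - ((25) * X 0 * X 10 + (-8) * X 1 * X 10 + (-4) * X 2 * X 10 + (-14) * X 3 * X 10 + (4) * X 4 * X 10 + (26) * X 5 * X 10 + (8) * X 6 * X 10 + (-2) * X 7 * X 10 + (-15) * X 8 * X 10 + (-73) * X 9 * X 10 + (-83) * X 10 * X 10) * (X 1 + 2 * X 2 + 2 * X 4 + 3 * X 5 - X 7 + 6 * X 8 - X 9) : MvP) ∈ JJ := by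
  have hkey : (C (21 : ℚ) * (X 0 * X 5 * X 10) - ((25) * X 0 * X 10 + (-8) * X 1 * X 10 + (-4) * X 2 * X 10 + (-14) * X 3 * X 10 + (4) * X 4 * X 10 + (26) * X 5 * X 10 + (8) * X 6 * X 10 + (-2) * X 7 * X 10 + (-15) * X 8 * X 10 + (-73) * X 9 * X 10 + (-83) * X 10 * X 10) * (X 1 + 2 * X 2 + 2 * X 4 + 3 * X 5 - X 7 + 6 * X 8 - X 9) : MvP) =
      ((25) * X 10) * ((0) * (X 2) - (X 1 + X 4) * (X 0)) +
      ((42) * X 10) * ((0) * (X 3) - (X 2 + X 5 + X 8) * (X 0)) +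
      ((-20) * X 10) * ((0) * (X 7 + X 10) - (X 3 + X 6 + X 9) * (X 0)) +
      ((-8) * X 10) * ((X 0) * (X 2) - (X 1 + X 4) * (X 1)) +
      ((-20) * X 10) * ((X 0) * (X 3) - (X 2 + X 5 + X 8) * (X 1)) +
      ((-22) * X 10) * ((X 0) * (X 7 + X 10) - (X 3 + X 6 + X 9) * (X 1)) +
      ((-8) * X 10) * ((X 1 + X 4) * (X 3) - (X 2 + X 5 + X 8) * (X 2)) +
      ((-28) * X 10) * ((X 1 + X 4) * (X 7 + X 10) - (X 3 + X 6 + X 9) * (X 2)) +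
      ((25) * X 10) * ((0) * (X 5) - (X 0) * (X 4)) +
      ((8) * X 10) * ((0) * (X 6) - (X 1 + X 4) * (X 4)) +
      ((42) * X 10) * ((0) * (X 7) - (X 2 + X 5 + X 8) * (X 4)) +
      ((16) * X 10) * ((0) * (X 11) - (X 3 + X 6 + X 9) * (X 4)) +
      ((22) * X 10) * ((X 0) * (X 6) - (X 1 + X 4) * (X 5)) +
      ((78) * X 10) * ((X 0) * (X 7) - (X 2 + X 5 + X 8) * (X 5)) +
      ((-20) * X 10) * ((X 0) * (X 11) - (X 3 + X 6 + X 9) * (X 5)) +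
      ((44) * X 10) * ((X 1 + X 4) * (X 7) - (X 2 + X 5 + X 8) * (X 6)) +
      ((14) * X 10) * ((X 2 + X 5 + X 8) * (X 11) - (X 3 + X 6 + X 9) * (X 7)) +
      ((108) * X 10) * ((0) * (X 9) - (X 0) * (X 8)) +
      ((-48) * X 10) * ((0) * (X 10) - (X 1 + X 4) * (X 8)) +
      ((-90) * X 10) * ((0) * (X 11) - (X 2 + X 5 + X 8) * (X 8)) +
      ((-198) * X 10) * ((0) * (0) - (X 3 + X 6 + X 9) * (X 8)) +
      ((-43) * X 10) * ((X 0) * (X 10) - (X 1 + X 4) * (X 9)) +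
      ((-225) * X 10) * ((X 0) * (X 11) - (X 2 + X 5 + X 8) * (X 9)) +
      ((73) * X 10) * ((X 0) * (0) - (X 3 + X 6 + X 9) * (X 9)) +
      ((-166) * X 10) * ((X 1 + X 4) * (X 11) - (X 2 + X 5 + X 8) * (X 10)) +
      ((22) * X 10) * ((X 1 + X 4) * (0) - (X 3 + X 6 + X 9) * (X 10)) +
      ((2) * X 10) * ((X 2 + X 5 + X 8) * (0) - (X 3 + X 6 + X 9) * (X 11)) +
      ((-12) * X 10) * ((X 0) * (X 5) - (X 1) * (X 4)) +
      ((-42) * X 10) * ((X 0) * (X 6) - (X 2) * (X 4)) +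
      ((-52) * X 10) * ((X 0) * (X 7) - (X 3) * (X 4)) +
      ((8) * X 10) * ((X 0) * (X 11) - (X 7 + X 10) * (X 4)) +
      ((-30) * X 10) * ((X 1) * (X 6) - (X 2) * (X 5)) +
      ((-22) * X 10) * ((X 1) * (X 7) - (X 3) * (X 5)) +
      ((-32) * X 10) * ((X 1) * (X 11) - (X 7 + X 10) * (X 5)) +
      ((-22) * X 10) * ((X 2) * (X 11) - (X 7 + X 10) * (X 6)) +
      ((2) * X 10) * ((X 3) * (X 11) - (X 7 + X 10) * (X 7)) +
      ((5) * X 10) * ((X 0) * (X 9) - (X 1) * (X 8)) +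
      ((44) * X 10) * ((X 0) * (X 10) - (X 2) * (X 8)) +
      ((114) * X 10) * ((X 0) * (X 11) - (X 3) * (X 8)) +
      ((-332) * X 10) * ((X 0) * (0) - (X 7 + X 10) * (X 8)) +
      ((111) * X 10) * ((X 1) * (X 10) - (X 2) * (X 9)) +
      ((-59) * X 10) * ((X 1) * (X 11) - (X 3) * (X 9)) +
      ((61) * X 10) * ((X 1) * (0) - (X 7 + X 10) * (X 9)) +
      ((-22) * X 10) * ((X 2) * (X 11) - (X 3) * (X 10)) +
      ((-21) * X 0 + (-132) * X 5) * ((X 2) * (0) - (X 7 + X 10) * (X 10)) +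
      ((123) * X 10) * ((X 4) * (X 9) - (X 5) * (X 8)) +
      ((202) * X 10) * ((X 4) * (X 10) - (X 6) * (X 8)) +
      ((335) * X 10) * ((X 4) * (X 11) - (X 7) * (X 8)) +
      ((14) * X 10) * ((X 4) * (0) - (X 11) * (X 8)) +
      ((-81) * X 10) * ((X 5) * (X 10) - (X 6) * (X 9)) +
      ((-2) * X 10) * ((X 5) * (0) - (X 11) * (X 9)) +
      ((132) * X 5 + (81) * X 10) * ((X 6) * (X 11) - (X 7) * (X 10)) +
      ((-132) * X 5 * X 6 + (123) * X 0 * X 10 + (257) * X 1 * X 10 + (30) * X 2 * X 10 + (-169) * X 4 * X 10 + (-14) * X 5 * X 10 + (-79) * X 6 * X 10) * X 11 := by rw [map_ofNat]; ring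
  rw [hkey]
  exact (add_mem (add_mem (add_mem (add_mem (add_mem (add_mem (add_mem (add_mem (add_mem (add_mem (add_mem (add_mem (add_mem (add_mem (add_mem (add_mem (add_mem (add_mem (add_mem (add_mem (add_mem (add_mem (add_mem (add_mem (add_mem (add_mem (add_mem (add_mem (add_mem (add_mem (add_mem (add_mem (add_mem (add_mem (add_mem (add_mem (add_mem (add_mem (add_mem (add_mem (add_mem (add_mem (add_mem (add_mem (add_mem (add_mem (add_mem (add_mem (add_mem (add_mem (add_mem (add_mem (segle (Ideal.mul_mem_left _ _ mnr_1)) (segle (Ideal.mul_mem_left _ _ mnr_2))) (segle (Ideal.mul_mem_left _ _ mnr_3))) (segle (Ideal.mul_mem_left _ _ mnr_4))) (segle (Ideal.mul_mem_left _ _ mnr_5))) (segle (Ideal.mul_mem_left _ _ mnr_6))) (segle (Ideal.mul_mem_left _ _ mnr_7))) (segle (Ideal.mul_mem_left _ _ mnr_8))) (segle (Ideal.mul_mem_left _ _ mnr_10))) (segle (Ideal.mul_mem_left _ _ mnr_11))) (segle (Ideal.mul_mem_left _ _ mnr_12))) (segle (Ideal.mul_mem_left _ _ mnr_13))) (segle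 (Ideal.mul_mem_left _ _ mnr_14))) (segle (Ideal.mul_mem_left _ _ mnr_15))) (segle (Ideal.mul_mem_left _ _ mnr_16))) (segle (Ideal.mul_mem_left _ _ mnr_17))) (segle (Ideal.mul_mem_left _ _ mnr_19))) (segle (Ideal.mul_mem_left _ _ mnr_20))) (segle (Ideal.mul_mem_left _ _ mnr_21))) (segle (Ideal.mul_mem_left _ _ mnr_22))) (segle (Ideal.mul_mem_left _ _ mnr_23))) (segle (Ideal.mul_mem_left _ _ mnr_24))) (segle (Ideal.mul_mem_left _ _ mnr_25))) (segle (Ideal.mul_mem_left _ _ mnr_26))) (segle (Ideal.mul_mem_left _ _ mnr_27))) (segle (Ideal.mul_mem_left _ _ mnr_28))) (segle (Ideal.mul_mem_left _ _ mnr_29))) (segle (Ideal.mul_mem_left _ _ mnr_30))) (segle (Ideal.mul_mem_left _ _ mnr_31))) (segle (Ideal.mul_mem_left _ _ mnr_32))) (segle (Ideal.mul_mem_left _ _ mnr_33))) (segle (Ideal.mul_mem_left _ _ mnr_34))) (segle (Ideal.mul_mem_left _ _ mnr_35))) (segle (Ideal.mul_mem_left _ _ mnr_36))) (segle (Ideal.mul_mem_left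 _ _ mnr_38))) (segle (Ideal.mul_mem_left _ _ mnr_39))) (segle (Ideal.mul_mem_left _ _ mnr_40))) (segle (Ideal.mul_mem_left _ _ mnr_41))) (segle (Ideal.mul_mem_left _ _ mnr_42))) (segle (Ideal.mul_mem_left _ _ mnr_43))) (segle (Ideal.mul_mem_left _ _ mnr_44))) (segle (Ideal.mul_mem_left _ _ mnr_45))) (segle (Ideal.mul_mem_left _ _ mnr_46))) (segle (Ideal.mul_mem_left _ _ mnr_47))) (segle (Ideal.mul_mem_left _ _ mnr_48))) (segle (Ideal.mul_mem_left _ _ mnr_50))) (segle (Ideal.mul_mem_left _ _ mnr_51))) (segle (Ideal.mul_mem_left _ _ mnr_52))) (segle (Ideal.mul_mem_left _ _ mnr_53))) (segle (Ideal.mul_mem_left _ _ mnr_54))) (segle (Ideal.mul_mem_left _ _ mnr_56))) (segle (Ideal.mul_mem_left _ _ mnr_57))) (x11le (Ideal.mul_mem_left _ _ (Ideal.mem_span_singleton_self _))))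

def Phi1 (p : MvP) : ℚ :=
  (1 : ℚ) * Dd 0 2 p +
  (-1 : ℚ) * Dd 0 3 p +
  (-1 : ℚ) * Dd 0 5 p +
  (1 : ℚ) * Dd 0 6 p +
  (1 : ℚ) * Dd 1 1 p +
  (-3 : ℚ) * Dd 1 2 p +
  (-1 : ℚ) * Dd 1 4 p +
  (2 : ℚ) * Dd 1 5 p +
  (-1 : ℚ) * Dd 1 7 p +
  (1 : ℚ) * Dd 1 10 p +
  (2 : ℚ) * Dd 2 3 p +
  (1 : ℚ) * Dd 2 4 p +
  (-3 : ℚ) * Dd 2 6 p +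
  (1 : ℚ) * Dd 2 7 p +
  (1 : ℚ) * Dd 2 9 p +
  (-1 : ℚ) * Dd 2 10 p +
  ((-1 : ℚ)/2) * Dd 3 3 p +
  (-1 : ℚ) * Dd 3 5 p +
  (1 : ℚ) * Dd 3 6 p +
  ((1 : ℚ)/2) * Dd 4 4 p +
  (-1 : ℚ) * Dd 4 5 p +
  (2 : ℚ) * Dd 5 6 p +
  (-1 : ℚ) * Dd 5 7 p +
  (-1 : ℚ) * Dd 5 9 p +
  (1 : ℚ) * Dd 5 10 p +
  (-1 : ℚ) * Dd 6 6 p +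
  (1 : ℚ) * Dd 6 9 p +
  ((-1 : ℚ)/2) * Dd 9 9 p

lemma Phi1_zero : Phi1 0 = 0 := by simp [Phi1, Dd]

lemma Phi1_add (p q : MvP) : Phi1 (p + q) = Phi1 p + Phi1 q := by
  simp only [Phi1, Dd, map_add]; ring

lemma Phi1_sub (p q : MvP) : Phi1 (p - q) = Phi1 p - Phi1 q := by
  simp only [Phi1, Dd, map_sub]; ring

lemma Phi1_mul_minor (r : MvP) (i i' : Fin 4) (j j' : Fin 5) :
    Phi1 (r * (segMat45 i j * segMat45 i' j' - segMat45 i j' * segMat45 i' j)) =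
      constantCoeff r * Phi1 (segMat45 i j * segMat45 i' j' - segMat45 i j' * segMat45 i' j) := by
  have h := fun (u v : Fin 12) => Dd_mul_quad u v r _ _ _ _ (cc_entry i j) (cc_entry i' j')
    (cc_entry i j') (cc_entry i' j)
  simp only [Phi1, h]
  ring

lemma Phi1_mul_X11 (r : MvP) : Phi1 (r * X 11) = 0 := by
  simp [Phi1, Dd, pderiv_mul, pderiv_num, Pi.single_apply]

lemma Phi1_mul_l (p : MvP) : Phi1 (p * (X 1 + X 3 - X 5 + X 9)) = 0 := by
  simp [Phi1, Dd, pderiv_mul, pderiv_num, Pi.single_apply]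
  try ring

lemma Phi1_m_val : Phi1 (X 5 * X 10) = 1 := by
  simp [Phi1, Dd, pderiv_mul, pderiv_num, Pi.single_apply]
  try norm_num

def Phi2 (p : MvP) : ℚ :=
  ((4 : ℚ)/7) * Dd 0 2 p +
  ((69 : ℚ)/7) * Dd 0 3 p +
  ((-4 : ℚ)/7) * Dd 0 5 p +
  (-16 : ℚ) * Dd 0 6 p +
  ((-47 : ℚ)/7) * Dd 0 7 p +
  ((43 : ℚ)/7) * Dd 0 9 p +
  ((-1 : ℚ)/7) * Dd 0 10 p +
  ((4 : ℚ)/7) * Dd 1 1 p +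
  ((293 : ℚ)/7) * Dd 1 2 p +
  (11 : ℚ) * Dd 1 3 p +
  ((-4 : ℚ)/7) * Dd 1 4 p +
  ((-267 : ℚ)/7) * Dd 1 5 p +
  ((-137 : ℚ)/7) * Dd 1 6 p +
  ((31 : ℚ)/7) * Dd 1 7 p +
  ((43 : ℚ)/7) * Dd 1 8 p +
  ((12 : ℚ)/7) * Dd 1 9 p +
  (-1 : ℚ) * Dd 1 10 p +
  (12 : ℚ) * Dd 2 2 p +
  ((-38 : ℚ)/7) * Dd 2 3 p +
  (-16 : ℚ) * Dd 2 4 p +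
  ((-137 : ℚ)/7) * Dd 2 5 p +
  ((69 : ℚ)/7) * Dd 2 6 p +
  ((-5 : ℚ)/7) * Dd 2 7 p +
  ((-1 : ℚ)/7) * Dd 2 8 p +
  (-1 : ℚ) * Dd 2 9 p +
  (-1 : ℚ) * Dd 2 10 p +
  ((-1 : ℚ)/2) * Dd 3 3 p +
  ((-47 : ℚ)/7) * Dd 3 4 p +
  ((31 : ℚ)/7) * Dd 3 5 p +
  ((-5 : ℚ)/7) * Dd 3 6 p +
  ((2 : ℚ)/7) * Dd 4 4 p +
  ((155 : ℚ)/7) * Dd 4 5 p +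
  ((60 : ℚ)/7) * Dd 4 6 p +
  ((-43 : ℚ)/7) * Dd 4 8 p +
  ((-13 : ℚ)/7) * Dd 4 9 p +
  ((103 : ℚ)/14) * Dd 5 5 p +
  ((-38 : ℚ)/7) * Dd 5 6 p +
  (-1 : ℚ) * Dd 5 7 p +
  ((-13 : ℚ)/7) * Dd 5 8 p +
  (1 : ℚ) * Dd 5 9 p +
  (1 : ℚ) * Dd 5 10 p +
  ((-1 : ℚ)/7) * Dd 6 6 p +
  (1 : ℚ) * Dd 6 9 p +
  (1 : ℚ) * Dd 8 8 p +
  ((-1 : ℚ)/2) * Dd 9 9 p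

lemma Phi2_zero : Phi2 0 = 0 := by simp [Phi2, Dd]

lemma Phi2_add (p q : MvP) : Phi2 (p + q) = Phi2 p + Phi2 q := by
  simp only [Phi2, Dd, map_add]; ring

lemma Phi2_sub (p q : MvP) : Phi2 (p - q) = Phi2 p - Phi2 q := by
  simp only [Phi2, Dd, map_sub]; ring

lemma Phi2_mul_minor (r : MvP) (i i' : Fin 4) (j j' : Fin 5) :
    Phi2 (r * (segMat45 i j * segMat45 i' j' - segMat45 i j' * segMat45 i' j)) =
      constantCoeff r * Phi2 (segMat45 i j * segMat45 i' j' - segMat45 i j' * segMat45 i' j) := by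
  have h := fun (u v : Fin 12) => Dd_mul_quad u v r _ _ _ _ (cc_entry i j) (cc_entry i' j')
    (cc_entry i j') (cc_entry i' j)
  simp only [Phi2, h]
  ring

lemma Phi2_mul_X11 (r : MvP) : Phi2 (r * X 11) = 0 := by
  simp [Phi2, Dd, pderiv_mul, pderiv_num, Pi.single_apply]

lemma Phi2_mul_l (p : MvP) : Phi2 (p * (X 1 + 2 * X 2 + 2 * X 4 + 3 * X 5 - X 7 + 6 * X 8 - X 9)) = 0 := by
  have e : (X 1 + 2 * X 2 + 2 * X 4 + 3 * X 5 - X 7 + 6 * X 8 - X 9 : MvP) =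
      X 1 + (X 2 + X 2) + (X 4 + X 4) + (X 5 + X 5 + X 5) - X 7 +
        (X 8 + X 8 + X 8 + X 8 + X 8 + X 8) - X 9 := by ring
  rw [e]
  simp [Phi2, Dd, pderiv_mul, pderiv_num, Pi.single_apply]
  try ring

lemma Phi2_m_val : Phi2 (X 5 * X 10) = 1 := by
  simp [Phi2, Dd, pderiv_mul, pderiv_num, Pi.single_apply]
  try norm_num

set_option maxHeartbeats 400000000 in
lemma Phi_minor_zero (i i' : Fin 4) (j j' : Fin 5) (hi : i < i') (hj : j < j') :
    Phi1 (segMat45 i j * segMat45 i' j' - segMat45 i j' * segMat45 i' j) = 0 ∧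
    Phi2 (segMat45 i j * segMat45 i' j' - segMat45 i j' * segMat45 i' j) = 0 := by
  fin_cases i <;> fin_cases i' <;> fin_cases j <;> fin_cases j' <;>
    first
    | exact absurd hi (by decide)
    | exact absurd hj (by decide)
    | (constructor <;> (simp [Phi1, Phi2, Dd, segMat45, pderiv_mul, Pi.single_apply]; try norm_num))

lemma Phi1_killJ (x : MvP) (hx : x ∈ JJ) : ∀ r : MvP, Phi1 (r * x) = 0 := by
  rw [JJ_eq] at hx
  refine Submodule.span_induction (p := fun y _ => ∀ r : MvP, Phi1 (r * y) = 0) ?_ ?_ ?_ ?_ hx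
  · rintro y (⟨i, i', j, j', hi, hj, rfl⟩ | rfl)
    · intro r
      rw [Phi1_mul_minor r i i' j j', (Phi_minor_zero i i' j j' hi hj).1, mul_zero]
    · exact Phi1_mul_X11
  · intro r; rw [mul_zero]; exact Phi1_zero
  · intro a b _ _ ha hb r; rw [mul_add, Phi1_add, ha r, hb r, add_zero]
  · intro c a _ ha r; rw [smul_eq_mul, ← mul_assoc]; exact ha (r * c)

lemma Phi2_killJ (x : MvP) (hx : x ∈ JJ) : ∀ r : MvP, Phi2 (r * x) = 0 := by
  rw [JJ_eq] at hx
  refine Submodule.span_induction (p := fun y _ => ∀ r : MvP, Phi2 (r * y) = 0) ?_ ?_ ?_ ?_ hx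
  · rintro y (⟨i, i', j, j', hi, hj, rfl⟩ | rfl)
    · intro r
      rw [Phi2_mul_minor r i i' j j', (Phi_minor_zero i i' j j' hi hj).2, mul_zero]
    · exact Phi2_mul_X11
  · intro r; rw [mul_zero]; exact Phi2_zero
  · intro a b _ _ ha hb r; rw [mul_add, Phi2_add, ha r, hb r, add_zero]
  · intro c a _ ha r; rw [smul_eq_mul, ← mul_assoc]; exact ha (r * c)

lemma notMem_1 : (wa 5 * wa 10) ∉ Ideal.span {wa 1 + wa 3 - wa 5 + wa 9} := by
  intro h
  obtain ⟨c, hc⟩ := Ideal.mem_span_singleton'.mp h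
  obtain ⟨p, rfl⟩ := Ideal.Quotient.mk_surjective c
  simp only [wa, ← map_mul, ← map_add, ← map_sub, ← map_ofNat (Ideal.Quotient.mk JJ)] at hc
  have hmem := Ideal.Quotient.eq.mp hc
  have h0 := Phi1_killJ _ hmem 1
  rw [one_mul, Phi1_sub, Phi1_mul_l, Phi1_m_val] at h0
  norm_num at h0

lemma notMem_2 : (wa 5 * wa 10) ∉ Ideal.span {wa 1 + 2 * wa 2 + 2 * wa 4 + 3 * wa 5 - wa 7 + 6 * wa 8 - wa 9} := by
  intro h
  obtain ⟨c, hc⟩ := Ideal.mem_span_singleton'.mp h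
  obtain ⟨p, rfl⟩ := Ideal.Quotient.mk_surjective c
  simp only [wa, ← map_mul, ← map_add, ← map_sub, ← map_ofNat (Ideal.Quotient.mk JJ)] at hc
  have hmem := Ideal.Quotient.eq.mp hc
  have h0 := Phi2_killJ _ hmem 1
  rw [one_mul, Phi2_sub, Phi2_mul_l, Phi2_m_val] at h0
  norm_num at h0

lemma uW_mem_1 : wa 0 * wa 5 * wa 10 ∈ Ideal.span {wa 1 + wa 3 - wa 5 + wa 9} := by
  have hq : Ideal.Quotient.mk JJ (C (1 : ℚ)) * (wa 0 * wa 5 * wa 10) =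
      Ideal.Quotient.mk JJ ((-2) * X 0 * X 10 + (-1) * X 2 * X 10 + (-1) * X 3 * X 10 + (-1) * X 4 * X 10 + (-2) * X 5 * X 10 + (-4) * X 8 * X 10) * (wa 1 + wa 3 - wa 5 + wa 9) := by
    simp only [wa, ← map_mul, ← map_add, ← map_sub, ← map_ofNat (Ideal.Quotient.mk JJ)]
    exact Ideal.Quotient.eq.mpr P2cert_1
  have hNinv : Ideal.Quotient.mk JJ (C ((1 : ℚ))⁻¹) * Ideal.Quotient.mk JJ (C (1 : ℚ)) = 1 := by
    rw [← map_mul, ← C_mul, inv_mul_cancel₀ (by norm_num : (1 : ℚ) ≠ 0), C_1, map_one]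
  refine Ideal.mem_span_singleton'.mpr
    ⟨Ideal.Quotient.mk JJ (C ((1 : ℚ))⁻¹) * Ideal.Quotient.mk JJ ((-2) * X 0 * X 10 + (-1) * X 2 * X 10 + (-1) * X 3 * X 10 + (-1) * X 4 * X 10 + (-2) * X 5 * X 10 + (-4) * X 8 * X 10), ?_⟩
  rw [mul_assoc, ← hq, ← mul_assoc, hNinv, one_mul]

lemma uW_mem_2 : wa 0 * wa 5 * wa 10 ∈ Ideal.span {wa 1 + 2 * wa 2 + 2 * wa 4 + 3 * wa 5 - wa 7 + 6 * wa 8 - wa 9} := by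
  have hq : Ideal.Quotient.mk JJ (C (21 : ℚ)) * (wa 0 * wa 5 * wa 10) =
      Ideal.Quotient.mk JJ ((25) * X 0 * X 10 + (-8) * X 1 * X 10 + (-4) * X 2 * X 10 + (-14) * X 3 * X 10 + (4) * X 4 * X 10 + (26) * X 5 * X 10 + (8) * X 6 * X 10 + (-2) * X 7 * X 10 + (-15) * X 8 * X 10 + (-73) * X 9 * X 10 + (-83) * X 10 * X 10) * (wa 1 + 2 * wa 2 + 2 * wa 4 + 3 * wa 5 - wa 7 + 6 * wa 8 - wa 9) := by
    simp only [wa, ← map_mul, ← map_add, ← map_sub, ← map_ofNat (Ideal.Quotient.mk JJ)]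
    exact Ideal.Quotient.eq.mpr P2cert_2
  have hNinv : Ideal.Quotient.mk JJ (C ((21 : ℚ))⁻¹) * Ideal.Quotient.mk JJ (C (21 : ℚ)) = 1 := by
    rw [← map_mul, ← C_mul, inv_mul_cancel₀ (by norm_num : (21 : ℚ) ≠ 0), C_1, map_one]
  refine Ideal.mem_span_singleton'.mpr
    ⟨Ideal.Quotient.mk JJ (C ((21 : ℚ))⁻¹) * Ideal.Quotient.mk JJ ((25) * X 0 * X 10 + (-8) * X 1 * X 10 + (-4) * X 2 * X 10 + (-14) * X 3 * X 10 + (4) * X 4 * X 10 + (26) * X 5 * X 10 + (8) * X 6 * X 10 + (-2) * X 7 * X 10 + (-15) * X 8 * X 10 + (-73) * X 9 * X 10 + (-83) * X 10 * X 10), ?_⟩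
  rw [mul_assoc, ← hq, ← mul_assoc, hNinv, one_mul]

lemma memX_0 (p : MvP) :
    Ideal.Quotient.mk JJ (p * X 0) * (wa 5 * wa 10) ∈ Ideal.span {wa 0 * wa 5 * wa 10} := by
  have e : Ideal.Quotient.mk JJ (p * X 0) * (wa 5 * wa 10) =
      Ideal.Quotient.mk JJ p * (wa 0 * wa 5 * wa 10) := by
    simp only [wa, map_mul]; ring
  rw [e]; exact Ideal.mul_mem_left _ _ (Ideal.mem_span_singleton_self _)

lemma memX_1 (p : MvP) :
    Ideal.Quotient.mk JJ (p * X 1) * (wa 5 * wa 10) ∈ Ideal.span {wa 0 * wa 5 * wa 10} := by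
  have hz : Ideal.Quotient.mk JJ (X 1) * (wa 5 * wa 10) = 0 := by
    simp only [wa, ← map_mul]
    exact Ideal.Quotient.eq_zero_iff_mem.mpr memJ_1
  have e : Ideal.Quotient.mk JJ (p * X 1) * (wa 5 * wa 10) =
      Ideal.Quotient.mk JJ p * (Ideal.Quotient.mk JJ (X 1) * (wa 5 * wa 10)) := by
    rw [map_mul]; ring
  rw [e, hz, mul_zero]; exact zero_mem _

lemma memX_2 (p : MvP) :
    Ideal.Quotient.mk JJ (p * X 2) * (wa 5 * wa 10) ∈ Ideal.span {wa 0 * wa 5 * wa 10} := by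
  have hz : Ideal.Quotient.mk JJ (X 2) * (wa 5 * wa 10) = 0 := by
    simp only [wa, ← map_mul]
    exact Ideal.Quotient.eq_zero_iff_mem.mpr memJ_2
  have e : Ideal.Quotient.mk JJ (p * X 2) * (wa 5 * wa 10) =
      Ideal.Quotient.mk JJ p * (Ideal.Quotient.mk JJ (X 2) * (wa 5 * wa 10)) := by
    rw [map_mul]; ring
  rw [e, hz, mul_zero]; exact zero_mem _

lemma memX_3 (p : MvP) :
    Ideal.Quotient.mk JJ (p * X 3) * (wa 5 * wa 10) ∈ Ideal.span {wa 0 * wa 5 * wa 10} := by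
  have hz : Ideal.Quotient.mk JJ (X 3) * (wa 5 * wa 10) = 0 := by
    simp only [wa, ← map_mul]
    exact Ideal.Quotient.eq_zero_iff_mem.mpr memJ_3
  have e : Ideal.Quotient.mk JJ (p * X 3) * (wa 5 * wa 10) =
      Ideal.Quotient.mk JJ p * (Ideal.Quotient.mk JJ (X 3) * (wa 5 * wa 10)) := by
    rw [map_mul]; ring
  rw [e, hz, mul_zero]; exact zero_mem _

lemma memX_4 (p : MvP) :
    Ideal.Quotient.mk JJ (p * X 4) * (wa 5 * wa 10) ∈ Ideal.span {wa 0 * wa 5 * wa 10} := by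
  have hz : Ideal.Quotient.mk JJ (X 4) * (wa 5 * wa 10) = 0 := by
    simp only [wa, ← map_mul]
    exact Ideal.Quotient.eq_zero_iff_mem.mpr memJ_4
  have e : Ideal.Quotient.mk JJ (p * X 4) * (wa 5 * wa 10) =
      Ideal.Quotient.mk JJ p * (Ideal.Quotient.mk JJ (X 4) * (wa 5 * wa 10)) := by
    rw [map_mul]; ring
  rw [e, hz, mul_zero]; exact zero_mem _

lemma memX_5 (p : MvP) :
    Ideal.Quotient.mk JJ (p * X 5) * (wa 5 * wa 10) ∈ Ideal.span {wa 0 * wa 5 * wa 10} := by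
  have hz : Ideal.Quotient.mk JJ (X 5) * (wa 5 * wa 10) = 0 := by
    simp only [wa, ← map_mul]
    exact Ideal.Quotient.eq_zero_iff_mem.mpr memJ_5
  have e : Ideal.Quotient.mk JJ (p * X 5) * (wa 5 * wa 10) =
      Ideal.Quotient.mk JJ p * (Ideal.Quotient.mk JJ (X 5) * (wa 5 * wa 10)) := by
    rw [map_mul]; ring
  rw [e, hz, mul_zero]; exact zero_mem _

lemma memX_6 (p : MvP) :
    Ideal.Quotient.mk JJ (p * X 6) * (wa 5 * wa 10) ∈ Ideal.span {wa 0 * wa 5 * wa 10} := by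
  have hz : Ideal.Quotient.mk JJ (X 6) * (wa 5 * wa 10) = 0 := by
    simp only [wa, ← map_mul]
    exact Ideal.Quotient.eq_zero_iff_mem.mpr memJ_6
  have e : Ideal.Quotient.mk JJ (p * X 6) * (wa 5 * wa 10) =
      Ideal.Quotient.mk JJ p * (Ideal.Quotient.mk JJ (X 6) * (wa 5 * wa 10)) := by
    rw [map_mul]; ring
  rw [e, hz, mul_zero]; exact zero_mem _

lemma memX_7 (p : MvP) :
    Ideal.Quotient.mk JJ (p * X 7) * (wa 5 * wa 10) ∈ Ideal.span {wa 0 * wa 5 * wa 10} := by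
  have hz : Ideal.Quotient.mk JJ (X 7) * (wa 5 * wa 10) = 0 := by
    simp only [wa, ← map_mul]
    exact Ideal.Quotient.eq_zero_iff_mem.mpr memJ_7
  have e : Ideal.Quotient.mk JJ (p * X 7) * (wa 5 * wa 10) =
      Ideal.Quotient.mk JJ p * (Ideal.Quotient.mk JJ (X 7) * (wa 5 * wa 10)) := by
    rw [map_mul]; ring
  rw [e, hz, mul_zero]; exact zero_mem _

lemma memX_8 (p : MvP) :
    Ideal.Quotient.mk JJ (p * X 8) * (wa 5 * wa 10) ∈ Ideal.span {wa 0 * wa 5 * wa 10} := by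
  have hz : Ideal.Quotient.mk JJ (X 8) * (wa 5 * wa 10) = 0 := by
    simp only [wa, ← map_mul]
    exact Ideal.Quotient.eq_zero_iff_mem.mpr memJ_8
  have e : Ideal.Quotient.mk JJ (p * X 8) * (wa 5 * wa 10) =
      Ideal.Quotient.mk JJ p * (Ideal.Quotient.mk JJ (X 8) * (wa 5 * wa 10)) := by
    rw [map_mul]; ring
  rw [e, hz, mul_zero]; exact zero_mem _

lemma memX_9 (p : MvP) :
    Ideal.Quotient.mk JJ (p * X 9) * (wa 5 * wa 10) ∈ Ideal.span {wa 0 * wa 5 * wa 10} := by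
  have hz : Ideal.Quotient.mk JJ (X 9) * (wa 5 * wa 10) = 0 := by
    simp only [wa, ← map_mul]
    exact Ideal.Quotient.eq_zero_iff_mem.mpr memJ_9
  have e : Ideal.Quotient.mk JJ (p * X 9) * (wa 5 * wa 10) =
      Ideal.Quotient.mk JJ p * (Ideal.Quotient.mk JJ (X 9) * (wa 5 * wa 10)) := by
    rw [map_mul]; ring
  rw [e, hz, mul_zero]; exact zero_mem _

lemma memX_10 (p : MvP) :
    Ideal.Quotient.mk JJ (p * X 10) * (wa 5 * wa 10) ∈ Ideal.span {wa 0 * wa 5 * wa 10} := by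
  have hz : Ideal.Quotient.mk JJ (X 10) * (wa 5 * wa 10) = 0 := by
    simp only [wa, ← map_mul]
    exact Ideal.Quotient.eq_zero_iff_mem.mpr memJ_10
  have e : Ideal.Quotient.mk JJ (p * X 10) * (wa 5 * wa 10) =
      Ideal.Quotient.mk JJ p * (Ideal.Quotient.mk JJ (X 10) * (wa 5 * wa 10)) := by
    rw [map_mul]; ring
  rw [e, hz, mul_zero]; exact zero_mem _

lemma memX_11 (p : MvP) :
    Ideal.Quotient.mk JJ (p * X 11) * (wa 5 * wa 10) ∈ Ideal.span {wa 0 * wa 5 * wa 10} := by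
  have hz : Ideal.Quotient.mk JJ (X 11) * (wa 5 * wa 10) = 0 := by
    simp only [wa, ← map_mul]
    exact Ideal.Quotient.eq_zero_iff_mem.mpr memJ_11
  have e : Ideal.Quotient.mk JJ (p * X 11) * (wa 5 * wa 10) =
      Ideal.Quotient.mk JJ p * (Ideal.Quotient.mk JJ (X 11) * (wa 5 * wa 10)) := by
    rw [map_mul]; ring
  rw [e, hz, mul_zero]; exact zero_mem _

lemma key_split : ∀ p : MvP, ∃ γ : ℚ,
    Ideal.Quotient.mk JJ p * (wa 5 * wa 10) - Ideal.Quotient.mk JJ (C γ) * (wa 5 * wa 10) ∈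
      Ideal.span {wa 0 * wa 5 * wa 10} := by
  intro p
  induction p using MvPolynomial.induction_on with
  | C a => exact ⟨a, by simp⟩
  | add p q hp hq =>
    obtain ⟨γ₁, h1⟩ := hp
    obtain ⟨γ₂, h2⟩ := hq
    refine ⟨γ₁ + γ₂, ?_⟩
    have e : Ideal.Quotient.mk JJ (p + q) * (wa 5 * wa 10) -
        Ideal.Quotient.mk JJ (C (γ₁ + γ₂)) * (wa 5 * wa 10) =
        (Ideal.Quotient.mk JJ p * (wa 5 * wa 10) - Ideal.Quotient.mk JJ (C γ₁) * (wa 5 * wa 10)) +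
        (Ideal.Quotient.mk JJ q * (wa 5 * wa 10) - Ideal.Quotient.mk JJ (C γ₂) * (wa 5 * wa 10)) := by
      rw [map_add, C_add, map_add]; ring
    rw [e]; exact add_mem h1 h2
  | mul_X p i hp =>
    refine ⟨0, ?_⟩
    rw [C_0, map_zero, zero_mul, sub_zero]
    fin_cases i <;>
      first
      | exact memX_0 p
      | exact memX_1 p
      | exact memX_2 p
      | exact memX_3 p
      | exact memX_4 p
      | exact memX_5 p
      | exact memX_6 p
      | exact memX_7 p
      | exact memX_8 p
      | exact memX_9 p
      | exact memX_10 p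
      | exact memX_11 p

lemma main_part (lW : SegW45) (hu : wa 0 * wa 5 * wa 10 ∈ Ideal.span {lW})
    (hnm : (wa 5 * wa 10) ∉ Ideal.span {lW}) :
    Ideal.span {wa 5 * wa 10} ⊓ Ideal.span {lW} = Ideal.span {wa 0 * wa 5 * wa 10} := by
  have hle : Ideal.span {wa 0 * wa 5 * wa 10} ≤ Ideal.span {lW} :=
    (Ideal.span_singleton_le_iff_mem _).mpr hu
  apply le_antisymm
  · intro x hx
    obtain ⟨hx1, hx2⟩ := Submodule.mem_inf.mp hx
    obtain ⟨c, hc⟩ := Ideal.mem_span_singleton'.mp hx1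
    obtain ⟨p, rfl⟩ := Ideal.Quotient.mk_surjective c
    obtain ⟨γ, hγ⟩ := key_split p
    by_cases h0 : γ = 0
    · subst h0
      rw [C_0, map_zero, zero_mul, sub_zero, hc] at hγ
      exact hγ
    · exfalso
      apply hnm
      have hz : Ideal.Quotient.mk JJ (C γ) * (wa 5 * wa 10) ∈ Ideal.span {lW} := by
        have e : Ideal.Quotient.mk JJ (C γ) * (wa 5 * wa 10) =
            Ideal.Quotient.mk JJ p * (wa 5 * wa 10) -
            (Ideal.Quotient.mk JJ p * (wa 5 * wa 10) -
              Ideal.Quotient.mk JJ (C γ) * (wa 5 * wa 10)) := by ring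
        rw [e]
        exact sub_mem (hc ▸ hx2) (hle hγ)
      have hγinv : Ideal.Quotient.mk JJ (C γ⁻¹) * Ideal.Quotient.mk JJ (C γ) = 1 := by
        rw [← map_mul, ← C_mul, inv_mul_cancel₀ h0, C_1, map_one]
      have e2 : wa 5 * wa 10 =
          Ideal.Quotient.mk JJ (C γ⁻¹) * (Ideal.Quotient.mk JJ (C γ) * (wa 5 * wa 10)) := by
        rw [← mul_assoc, hγinv, one_mul]
      rw [e2]
      exact Ideal.mul_mem_left _ _ hz
  · apply le_inf
    · exact (Ideal.span_singleton_le_iff_mem _).mpr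
        (Ideal.mem_span_singleton'.mpr ⟨wa 0, by ring⟩)
    · exact hle

theorem stmt_17 :
    Ideal.span {wa 5 * wa 10} ⊓ Ideal.span {wa 1 + wa 3 - wa 5 + wa 9} =
      Ideal.span {wa 0 * wa 5 * wa 10} ∧
    Ideal.span {wa 5 * wa 10} ⊓
        Ideal.span {wa 1 + 2 * wa 2 + 2 * wa 4 + 3 * wa 5 - wa 7 + 6 * wa 8 - wa 9} =
      Ideal.span {wa 0 * wa 5 * wa 10} :=
  ⟨main_part _ uW_mem_1 notMem_1, main_part _ uW_mem_2 notMem_2⟩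
end
end

section
/- Let k be a field, n ≥ 1 and c ≥ 1 integers, and let V_{n,c} be the c-th Veronese subring of S = k[x₁,…,x_n], i.e., the k-subalgebra of S generated by all monomials of degree c (whose degree-i component is S_{ic}). Then the elements x₁ᶜ, x₂ᶜ, …, x_nᶜ of V_{n,c} form a regular sequence on V_{n,c}. -/
open MvPolynomial

set_option synthInstance.maxHeartbeats 1000000
set_option maxHeartbeats 1000000

noncomputable section

/-- The `c`-th Veronese subring of `k[x₁,…,xₙ]`: the `k`-subalgebra generated by
all monomials of degree `c`. -/
def veroneseSubring (k : Type*) [Field k] (n c : ℕ) :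
    Subalgebra k (MvPolynomial (Fin n) k) :=
  Algebra.adjoin k
    {m | ∃ d : Fin n →₀ ℕ, (d.sum fun _ e => e) = c ∧ m = monomial d (1 : k)}

namespace VeroneseAux

variable {k : Type*} [Field k] {n c : ℕ}

/-- total degree of an exponent vector -/
abbrev vdeg (d : Fin n →₀ ℕ) : ℕ := d.sum fun _ e => e

lemma vdeg_add (a b : Fin n →₀ ℕ) : vdeg (a + b) = vdeg a + vdeg b :=
  Finsupp.sum_add_index' (fun _ => rfl) (fun _ _ _ => rfl)

lemma vdeg_single (i : Fin n) (m : ℕ) : vdeg (Finsupp.single i m) = m :=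
  Finsupp.sum_single_index rfl

lemma vdeg_zero : vdeg (0 : Fin n →₀ ℕ) = 0 := Finsupp.sum_zero_index

lemma eq_zero_of_vdeg_zero {d : Fin n →₀ ℕ} (h : vdeg d = 0) : d = 0 := by
  ext i
  by_cases hi : d i = 0
  · simp [hi]
  · exfalso
    have hmem : i ∈ d.support := Finsupp.mem_support_iff.mpr hi
    have : d i ≤ vdeg d := Finset.single_le_sum (fun _ _ => Nat.zero_le _) hmem
    omega

lemma exists_le_vdeg (d : Fin n →₀ ℕ) : ∀ j, j ≤ vdeg d → ∃ e, e ≤ d ∧ vdeg e = j := by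
  intro j
  induction j with
  | zero => intro _; exact ⟨0, zero_le, vdeg_zero⟩
  | succ j ih =>
    intro hj
    obtain ⟨e, he, hdeg⟩ := ih (le_trans (Nat.le_succ j) hj)
    have hne : e ≠ d := by
      intro h; subst h; omega
    have hex : ∃ i, e i < d i := by
      by_contra h
      push_neg at h
      exact hne (le_antisymm he (Finsupp.le_def.mpr h))
    obtain ⟨i, hi⟩ := hex
    refine ⟨e + Finsupp.single i 1, ?_, ?_⟩
    · rw [Finsupp.le_def]
      intro a
      rw [Finsupp.add_apply, Finsupp.single_apply]
      by_cases hai : i = a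
      · subst hai; simpa using hi
      · simp only [if_neg hai, add_zero]
        exact Finsupp.le_def.mp he a
    · rw [vdeg_add, hdeg, vdeg_single]

lemma monomial_mem_veronese : ∀ (m : ℕ) (d : Fin n →₀ ℕ), vdeg d = m * c →
    monomial d (1 : k) ∈ veroneseSubring k n c := by
  intro m
  induction m with
  | zero =>
    intro d hd
    have : d = 0 := eq_zero_of_vdeg_zero (by simpa using hd)
    subst this
    simpa [monomial_zero'] using (veroneseSubring k n c).one_mem
  | succ m ih =>
    intro d hd
    have hcle : c ≤ vdeg d := by rw [hd]; nlinarith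
    obtain ⟨e, he, hdeg⟩ := exists_le_vdeg d c hcle
    have hsplit : d = e + (d - e) := (add_tsub_cancel_of_le he).symm
    have hdeg2 : vdeg (d - e) = m * c := by
      have h2 := vdeg_add e (d - e)
      rw [← hsplit] at h2
      have hd' : vdeg d = m * c + c := by rw [hd]; ring
      omega
    have h1 : monomial e (1 : k) ∈ veroneseSubring k n c :=
      Algebra.subset_adjoin ⟨e, hdeg, rfl⟩
    have h2 : monomial (d - e) (1 : k) ∈ veroneseSubring k n c := ih _ hdeg2
    have : monomial d (1 : k) = monomial e (1 : k) * monomial (d - e) (1 : k) := by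
      rw [monomial_mul, one_mul, ← hsplit]
    rw [this]
    exact mul_mem h1 h2

lemma mem_veronese_of_support {p : MvPolynomial (Fin n) k}
    (h : ∀ d ∈ p.support, c ∣ vdeg d) : p ∈ veroneseSubring k n c := by
  rw [← support_sum_monomial_coeff p]
  apply sum_mem
  intro d hd
  obtain ⟨m, hm⟩ := h d hd
  have : monomial d (coeff d p) = C (coeff d p) * monomial d (1 : k) := by
    rw [C_mul_monomial, mul_one]
  rw [this]
  exact mul_mem ((veroneseSubring k n c).algebraMap_mem _)
    (monomial_mem_veronese m d (by rw [hm, Nat.mul_comm]))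

/-- polynomials all of whose monomials have degree divisible by `c`, as a subalgebra -/
def veroneseBig (k : Type*) [Field k] (n c : ℕ) : Subalgebra k (MvPolynomial (Fin n) k) where
  carrier := {p | ∀ d ∈ p.support, c ∣ vdeg d}
  mul_mem' := by
    intro p q hp hq d hd
    have := MvPolynomial.support_mul p q hd
    rw [Finset.mem_add] at this
    obtain ⟨a, ha, b, hb, rfl⟩ := this
    rw [vdeg_add]
    exact dvd_add (hp a ha) (hq b hb)
  add_mem' := by
    intro p q hp hq d hd
    have := Finsupp.support_add hd
    rw [Finset.mem_union] at this
    rcases this with h | h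
    · exact hp d h
    · exact hq d h
  algebraMap_mem' := by
    intro r d hd
    rw [MvPolynomial.mem_support_iff] at hd
    have : coeff d (algebraMap k (MvPolynomial (Fin n) k) r) = if 0 = d then r else 0 := by
      rw [MvPolynomial.algebraMap_eq, coeff_C]
    rw [this] at hd
    by_cases h0 : (0 : Fin n →₀ ℕ) = d
    · subst h0; simp [vdeg_zero]
    · simp [h0] at hd

lemma support_of_mem_veronese {p : MvPolynomial (Fin n) k}
    (hp : p ∈ veroneseSubring k n c) : ∀ d ∈ p.support, c ∣ vdeg d := by
  have hle : veroneseSubring k n c ≤ veroneseBig k n c := by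
    apply Algebra.adjoin_le
    rintro m ⟨d, hd, rfl⟩
    intro e he
    rw [MvPolynomial.mem_support_iff, coeff_monomial] at he
    by_cases hde : d = e
    · subst hde; exact ⟨1, by rw [Nat.mul_one]; exact hd⟩
    · simp [hde] at he
  exact hle hp

/-- projection onto the span of monomials of degree divisible by `c` -/
def proj (c : ℕ) (p : MvPolynomial (Fin n) k) : MvPolynomial (Fin n) k :=
  ∑ d ∈ p.support.filter (fun d => c ∣ vdeg d), monomial d (coeff d p)

lemma coeff_proj (p : MvPolynomial (Fin n) k) (e : Fin n →₀ ℕ) :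
    coeff e (proj c p) = if c ∣ vdeg e then coeff e p else 0 := by
  rw [proj, MvPolynomial.coeff_sum]
  have : ∀ d ∈ p.support.filter (fun d => c ∣ vdeg d),
      coeff e (monomial d (coeff d p)) = if d = e then coeff d p else 0 := by
    intro d _; rw [coeff_monomial]
  rw [Finset.sum_congr rfl this, Finset.sum_ite_eq' (p.support.filter (fun d => c ∣ vdeg d)) e
    (fun d => coeff d p)]
  by_cases h1 : c ∣ vdeg e
  · by_cases h2 : e ∈ p.support
    · rw [if_pos (Finset.mem_filter.mpr ⟨h2, h1⟩), if_pos h1]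
    · have h2' := MvPolynomial.notMem_support_iff.mp h2
      rw [if_pos h1, h2', if_neg (fun hmem => h2 (Finset.mem_filter.mp hmem).1)]
  · have hnm : e ∉ Finset.filter (fun d => c ∣ vdeg d) p.support :=
      fun hmem => h1 (Finset.mem_filter.mp hmem).2
    rw [if_neg hnm, if_neg h1]

lemma proj_add (p q : MvPolynomial (Fin n) k) : proj c (p + q) = proj c p + proj c q := by
  apply MvPolynomial.ext
  intro e
  rw [MvPolynomial.coeff_add, coeff_proj, coeff_proj, coeff_proj, MvPolynomial.coeff_add]
  split <;> simp

lemma proj_zero : proj c (0 : MvPolynomial (Fin n) k) = 0 := by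
  apply MvPolynomial.ext
  intro e
  rw [coeff_proj]
  simp

lemma proj_mem (p : MvPolynomial (Fin n) k) : proj c p ∈ veroneseSubring k n c := by
  apply mem_veronese_of_support
  intro d hd
  rw [MvPolynomial.mem_support_iff, coeff_proj] at hd
  by_cases h : c ∣ vdeg d
  · exact h
  · simp [h] at hd

lemma proj_eq_self {p : MvPolynomial (Fin n) k} (h : ∀ d ∈ p.support, c ∣ vdeg d) :
    proj c p = p := by
  apply MvPolynomial.ext
  intro e
  rw [coeff_proj]
  by_cases he : c ∣ vdeg e
  · rw [if_pos he]
  · rw [if_neg he]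
    by_contra hne
    exact he (h e (MvPolynomial.mem_support_iff.mpr (fun hh => hne hh.symm)))

lemma proj_mul {p : MvPolynomial (Fin n) k} (hp : ∀ d ∈ p.support, c ∣ vdeg d)
    (q : MvPolynomial (Fin n) k) : proj c (p * q) = p * proj c q := by
  apply MvPolynomial.ext
  intro e
  rw [coeff_proj, MvPolynomial.coeff_mul, MvPolynomial.coeff_mul]
  by_cases h : c ∣ vdeg e
  · rw [if_pos h]
    apply Finset.sum_congr rfl
    intro x hx
    rw [Finset.HasAntidiagonal.mem_antidiagonal] at hx
    rw [coeff_proj]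
    by_cases h1 : coeff x.1 p = 0
    · simp [h1]
    · have hd1 : c ∣ vdeg x.1 := hp _ (MvPolynomial.mem_support_iff.mpr h1)
      have hsum : vdeg x.1 + vdeg x.2 = vdeg e := by rw [← vdeg_add, hx]
      have hd2 : c ∣ vdeg x.2 := (Nat.dvd_add_right hd1).mp (hsum ▸ h)
      rw [if_pos hd2]
  · rw [if_neg h]
    symm
    apply Finset.sum_eq_zero
    intro x hx
    rw [Finset.HasAntidiagonal.mem_antidiagonal] at hx
    rw [coeff_proj]
    by_cases h1 : coeff x.1 p = 0
    · simp [h1]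
    · have hd1 : c ∣ vdeg x.1 := hp _ (MvPolynomial.mem_support_iff.mpr h1)
      have hsum : vdeg x.1 + vdeg x.2 = vdeg e := by rw [← vdeg_add, hx]
      rw [if_neg, mul_zero]
      intro hd2
      exact h (hsum ▸ dvd_add hd1 hd2)

/-- cancellation in the big polynomial ring, by monomial ideal membership -/
lemma key_cancel (T : Set (Fin n)) (j : Fin n) (hj : j ∉ T) (f : MvPolynomial (Fin n) k)
    (h : (X j : MvPolynomial (Fin n) k) ^ c * f ∈
      Ideal.span ((fun d => monomial d (1 : k)) '' ((fun i => Finsupp.single i c) '' T))) :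
    f ∈ Ideal.span ((fun d => monomial d (1 : k)) '' ((fun i => Finsupp.single i c) '' T)) := by
  rw [mem_ideal_span_monomial_image] at h ⊢
  intro e he
  have he' : Finsupp.single j c + e ∈ ((X j : MvPolynomial (Fin n) k) ^ c * f).support := by
    rw [MvPolynomial.mem_support_iff, X_pow_eq_monomial, coeff_monomial_mul, one_mul]
    exact MvPolynomial.mem_support_iff.mp he
  obtain ⟨s, hs, hle⟩ := h _ he'
  obtain ⟨i, hiT, rfl⟩ := hs
  refine ⟨_, ⟨i, hiT, rfl⟩, ?_⟩
  rw [Finsupp.le_def]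
  intro a
  have hine : i ≠ j := fun hij => hj (hij ▸ hiT)
  have := Finsupp.le_def.mp hle a
  rw [Finsupp.add_apply] at this
  by_cases hai : a = i
  · subst hai
    rw [Finsupp.single_apply, if_pos rfl] at this ⊢
    rw [Finsupp.single_apply, if_neg (fun hja => hine hja.symm)] at this
    omega
  · rw [Finsupp.single_apply, if_neg (fun hh => hai hh.symm)]
    exact Nat.zero_le _

lemma isSMulRegular_quot {R : Type*} [CommRing R] (I : Ideal R) (r : R)
    (h : ∀ x, r * x ∈ I → x ∈ I) :
    IsSMulRegular (R ⧸ (I • ⊤ : Submodule R R)) r := by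
  have hI : (I • ⊤ : Submodule R R) = I := by rw [smul_eq_mul, Ideal.mul_top]
  intro a b hab
  obtain ⟨x, rfl⟩ := Submodule.Quotient.mk_surjective _ a
  obtain ⟨y, rfl⟩ := Submodule.Quotient.mk_surjective _ b
  simp only [← Submodule.Quotient.mk_smul] at hab
  rw [Submodule.Quotient.eq] at hab
  rw [Submodule.Quotient.eq, hI]
  rw [hI] at hab
  have hmem : r * (x - y) ∈ I := by
    simpa [smul_eq_mul, mul_sub] using hab
  exact h _ hmem

lemma mem_take_ofFn {α : Type*} {n : ℕ} (v : Fin n → α) (i : ℕ) (x : α) :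
    x ∈ (List.ofFn v).take i ↔ ∃ j : Fin n, (j : ℕ) < i ∧ v j = x := by
  rw [List.mem_iff_getElem]
  constructor
  · rintro ⟨m, hm, rfl⟩
    have hmlen : m < min i n := by simpa using hm
    have hmn : m < n := lt_of_lt_of_le hmlen (min_le_right _ _)
    have hmi : m < i := lt_of_lt_of_le hmlen (min_le_left _ _)
    refine ⟨⟨m, hmn⟩, hmi, ?_⟩
    rw [List.getElem_take, List.getElem_ofFn]
  · rintro ⟨j, hj, rfl⟩
    have hlen : (j : ℕ) < ((List.ofFn v).take i).length := by
      simp [List.length_take]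
      omega
    refine ⟨j, hlen, ?_⟩
    rw [List.getElem_take, List.getElem_ofFn]

end VeroneseAux

open VeroneseAux in
theorem stmt_19 (k : Type*) [Field k] (n c : ℕ) (hn : 1 ≤ n) (hc : 1 ≤ c)
    (v : Fin n → veroneseSubring k n c)
    (hv : ∀ i, (v i : MvPolynomial (Fin n) k) = X i ^ c) :
    RingTheory.Sequence.IsRegular (veroneseSubring k n c) (List.ofFn v) := by
  let V := veroneseSubring k n c
  let S := MvPolynomial (Fin n) k
  -- generating sets agree in S
  have hgen : ∀ T : Set (Fin n), (algebraMap V S) '' (v '' T)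
      = (fun d => monomial d (1 : k)) '' ((fun i => Finsupp.single i c) '' T) := by
    intro T
    rw [Set.image_image, Set.image_image]
    apply Set.image_congr
    intro i _
    show ((v i : S)) = monomial (Finsupp.single i c) (1 : k)
    rw [hv i, X_pow_eq_monomial]
  -- the main cancellation lemma inside V
  have cancel : ∀ (T : Set (Fin n)) (j : Fin n), j ∉ T → ∀ a : V,
      v j * a ∈ Ideal.span (v '' T) → a ∈ Ideal.span (v '' T) := by
    intro T j hj a ha
    have haS : ((v j * a : V) : S) ∈ Ideal.span ((algebraMap V S) '' (v '' T)) := by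
      have := Ideal.mem_map_of_mem (algebraMap V S) ha
      rwa [Ideal.map_span] at this
    have hcoe : ((v j * a : V) : S) = (X j : S) ^ c * (a : S) := by
      push_cast
      rw [hv j]
    rw [hcoe, hgen T] at haS
    have haS2 := key_cancel T j hj (a : S) haS
    rw [← hgen T] at haS2
    obtain ⟨f, hfsupp, hfsum⟩ := Submodule.mem_span_set.mp haS2
    have hstep : ∃ b ∈ Ideal.span (v '' T), proj c (f.sum fun mi r => r • mi) = (b : S) := by
      rw [Finsupp.sum]
      apply Finset.sum_induction _ (fun x => ∃ b ∈ Ideal.span (v '' T), proj c x = (b : S))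
      · rintro x y ⟨b1, hb1, hx⟩ ⟨b2, hb2, hy⟩
        exact ⟨b1 + b2, add_mem hb1 hb2, by rw [proj_add, hx, hy]; push_cast; ring⟩
      · exact ⟨0, zero_mem _, by rw [proj_zero]; push_cast; ring⟩
      · intro g hg
        obtain ⟨b0, hb0T, hb0⟩ := hfsupp hg
        obtain ⟨i0, hi0T, rfl⟩ := hb0T
        refine ⟨v i0 * ⟨proj c (f g), proj_mem _⟩, ?_, ?_⟩
        · exact Ideal.mul_mem_right _ _ (Ideal.subset_span ⟨i0, hi0T, rfl⟩)
        · have : f g • g = ((v i0 : S)) * f g := by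
            rw [← hb0, smul_eq_mul, mul_comm]
            rfl
          rw [this, proj_mul (support_of_mem_veronese (v i0).2) (f g)]
          push_cast
          ring
    obtain ⟨b, hb, hbeq⟩ := hstep
    have : (a : S) = (b : S) := by
      rw [← proj_eq_self (support_of_mem_veronese a.2), ← hfsum, hbeq]
    have hab : a = b := Subtype.coe_injective this
    rw [hab]
    exact hb
  -- one is not in the full ideal
  have hone : (1 : V) ∉ Ideal.span (v '' Set.univ) := by
    intro h1
    have h1S : ((1 : V) : S) ∈ Ideal.span ((algebraMap V S) '' (v '' Set.univ)) := by
      have := Ideal.mem_map_of_mem (algebraMap V S) h1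
      rwa [Ideal.map_span] at this
    rw [hgen, mem_ideal_span_monomial_image] at h1S
    have h0 : (0 : Fin n →₀ ℕ) ∈ ((1 : V) : S).support := by
      rw [MvPolynomial.mem_support_iff]
      show coeff 0 (1 : S) ≠ 0
      rw [MvPolynomial.coeff_zero_one]
      exact one_ne_zero
    obtain ⟨s, ⟨i, _, rfl⟩, hle⟩ := h1S _ h0
    have := Finsupp.le_def.mp hle i
    rw [Finsupp.single_apply, if_pos rfl, Finsupp.coe_zero, Pi.zero_apply] at this
    omega
  constructor
  · -- weakly regular
    constructor
    intro i hi
    rw [List.length_ofFn] at hi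
    have hset : {r | r ∈ (List.ofFn v).take i} = v '' {j : Fin n | (j : ℕ) < i} := by
      ext x
      rw [Set.mem_setOf_eq, mem_take_ofFn]
      constructor
      · rintro ⟨j, hj, rfl⟩; exact ⟨j, hj, rfl⟩
      · rintro ⟨j, hj, rfl⟩; exact ⟨j, hj, rfl⟩
    rw [Ideal.ofList, hset]
    have := isSMulRegular_quot (R := V) (Ideal.span (v '' {j : Fin n | (j : ℕ) < i}))
      (v ⟨i, hi⟩) (cancel {j : Fin n | (j : ℕ) < i} ⟨i, hi⟩ (by simp) )
    convert this using 2
    rw [List.getElem_ofFn]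
  · -- top ≠ smul
    intro htop
    apply hone
    have h1 : (1 : V) ∈ (Ideal.ofList (List.ofFn v) • ⊤ : Submodule V V) := by
      rw [← htop]; trivial
    rw [smul_eq_mul, Ideal.mul_top] at h1
    have hset : {r | r ∈ List.ofFn v} = v '' Set.univ := by
      ext x
      simp [List.mem_ofFn, Set.image_univ, Set.mem_range]
    rwa [Ideal.ofList, hset] at h1
end
end
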